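/- arXiv:quant-ph/0607074 — 3 statements merged into one kernel-verified Lean document; each statement's English description precedes it below -/
import Mathlib

section
/- Fix an integer r ≥ 1. Let B be the formal power series in two commuting variables X and Y with integer coefficients whose coefficient of X^n Y^m is the number of noncrossing contractions with exactly m edges of the word (a^r a†)^n. Then B satisfies the functional equation B = (1 + X·B)·(1 + X·Y·B)^r. -/
/-- Two edges `(i,j)` and `(p,q)` cross if `i < p < j < q` or `p < i < q < j`. -/
def Crosses {N : ℕ} (e f : Fin N × Fin N) : Prop :=
  (e.1 < f.1 ∧ f.1 < e.2 ∧ e.2 < f.2) ∨ (f.1 < e.1 ∧ e.1 < f.2 ∧ f.2 < e.2)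

/-- A contraction of the word `w`: a set of edges `(i,j)` with `i < j`, `w i = false` (an `a`),
`w j = true` (an `a†`), whose endpoints are pairwise distinct. -/
def IsContraction {N : ℕ} (w : Fin N → Bool) (E : Finset (Fin N × Fin N)) : Prop :=
  (∀ e ∈ E, e.1 < e.2 ∧ w e.1 = false ∧ w e.2 = true) ∧
  (∀ e ∈ E, ∀ f ∈ E, e ≠ f → e.1 ≠ f.1 ∧ e.1 ≠ f.2 ∧ e.2 ≠ f.1 ∧ e.2 ≠ f.2)

/-- A set of edges is noncrossing if no two of its edges cross. -/
def IsNoncrossing {N : ℕ} (E : Finset (Fin N × Fin N)) : Prop :=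
  ∀ e ∈ E, ∀ f ∈ E, ¬ Crosses e f

/-- The number of noncrossing contractions of `w` with exactly `m` edges. -/
noncomputable def ncCount {N : ℕ} (w : Fin N → Bool) (m : ℕ) : ℕ :=
  Nat.card {E : Finset (Fin N × Fin N) //
    IsContraction w E ∧ IsNoncrossing E ∧ E.card = m}

/-- The word `(a^r a†)^n`, of length `(r+1)n`: `n` blocks of `r` copies of `a` (`false`)
followed by one `a†` (`true`). -/
def wordRA (r n : ℕ) : Fin ((r + 1) * n) → Bool := fun i => decide (i.val % (r + 1) = r)


namespace NCaux
open Finset MvPowerSeries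

/-- crossing for ℕ-pairs -/
def Cr (e f : ℕ × ℕ) : Prop :=
  (e.1 < f.1 ∧ f.1 < e.2 ∧ e.2 < f.2) ∨ (f.1 < e.1 ∧ e.1 < f.2 ∧ f.2 < e.2)

instance : DecidableRel Cr := fun e f => by unfold Cr; infer_instance

/-- a valid noncrossing contraction of the length-`N` word `w : ℕ → Bool` -/
def Ok (w : ℕ → Bool) (N : ℕ) (E : Finset (ℕ × ℕ)) : Prop :=
  (∀ e ∈ E, e.1 < e.2 ∧ e.2 < N ∧ w e.1 = false ∧ w e.2 = true) ∧
  (∀ e ∈ E, ∀ f ∈ E, e ≠ f → e.1 ≠ f.1 ∧ e.1 ≠ f.2 ∧ e.2 ≠ f.1 ∧ e.2 ≠ f.2) ∧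
  (∀ e ∈ E, ∀ f ∈ E, ¬ Cr e f)

instance (w N) : DecidablePred (Ok w N) := fun E => by unfold Ok; infer_instance

def Dall (w : ℕ → Bool) (N : ℕ) : Finset (Finset (ℕ × ℕ)) :=
  (Finset.range N ×ˢ Finset.range N).powerset.filter (Ok w N)

def Dset (w : ℕ → Bool) (N m : ℕ) : Finset (Finset (ℕ × ℕ)) :=
  (Dall w N).filter (fun E => E.card = m)

def cnt (w : ℕ → Bool) (N m : ℕ) : ℕ := (Dset w N m).card

lemma mem_Dall {w N E} : E ∈ Dall w N ↔ Ok w N E := by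
  unfold Dall
  simp only [mem_filter, mem_powerset, and_iff_right_iff_imp]
  intro h e he
  obtain ⟨h1, h2, h3, _⟩ := h.1 e he
  exact mem_product.2 ⟨mem_range.2 (lt_trans h1 h2), mem_range.2 h2⟩

lemma mem_Dset {w N m E} : E ∈ Dset w N m ↔ Ok w N E ∧ E.card = m := by
  unfold Dset; rw [mem_filter, mem_Dall]

/-- cnt only depends on values of w below N -/
lemma cnt_congr {w w' : ℕ → Bool} {N : ℕ} (h : ∀ i < N, w i = w' i) (m : ℕ) :
    cnt w N m = cnt w' N m := by
  unfold cnt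
  congr 1
  ext E
  simp only [mem_Dset, and_congr_left_iff]
  intro _
  have key : ∀ (u v : ℕ → Bool), (∀ i < N, u i = v i) → Ok u N E → Ok v N E := by
    intro u v huv ⟨h1, h2, h3⟩
    refine ⟨fun e he => ?_, h2, h3⟩
    obtain ⟨a, b, c, d⟩ := h1 e he
    exact ⟨a, b, by rw [← huv _ (lt_trans a b)]; exact c, by rw [← huv _ b]; exact d⟩
  constructor
  · exact fun hE => key w w' h hE
  · exact fun hE => key w' w (fun i hi => (h i hi).symm) hE

/-- dead trailing whites can be dropped -/
lemma cnt_deadTail {w : ℕ → Bool} {N M : ℕ} (hNM : N ≤ M)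
    (h : ∀ i, N ≤ i → i < M → w i = false) (m : ℕ) :
    cnt w M m = cnt w N m := by
  unfold cnt
  congr 1
  ext E
  simp only [mem_Dset, and_congr_left_iff]
  intro _
  constructor
  · rintro ⟨h1, h2, h3⟩
    refine ⟨fun e he => ?_, h2, h3⟩
    obtain ⟨a, b, c, d⟩ := h1 e he
    refine ⟨a, ?_, c, d⟩
    by_contra hb
    push_neg at hb
    rw [h e.2 hb b] at d; exact Bool.false_ne_true d
  · rintro ⟨h1, h2, h3⟩
    exact ⟨fun e he => by
      obtain ⟨a, b, c, d⟩ := h1 e he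
      exact ⟨a, lt_of_lt_of_le b hNM, c, d⟩, h2, h3⟩

lemma cnt_zero (w : ℕ → Bool) (m : ℕ) : cnt w 0 m = if m = 0 then 1 else 0 := by
  unfold cnt
  have : Dset w 0 m = if m = 0 then {∅} else ∅ := by
    ext E
    simp only [mem_Dset]
    split <;> rename_i hm
    · subst hm
      simp only [mem_singleton, Finset.card_eq_zero]
      constructor
      · rintro ⟨_, h⟩; exact h
      · rintro rfl
        exact ⟨⟨fun e he => absurd he (notMem_empty e), fun e he => absurd he (notMem_empty e),
          fun e he => absurd he (notMem_empty e)⟩, rfl⟩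
    · simp only [notMem_empty, iff_false]
      rintro ⟨⟨h1, _, _⟩, h2⟩
      have : E = ∅ := by
        rw [Finset.eq_empty_iff_forall_notMem]
        intro e he
        exact absurd (h1 e he).2.1 (Nat.not_lt_zero _)
      rw [this] at h2; simp at h2; exact hm h2.symm
  rw [this]
  split <;> simp


/-- transporting Ok along a coordinatewise strictly monotone relabeling -/
lemma ok_image {w w' : ℕ → Bool} {N N' : ℕ} {E : Finset (ℕ × ℕ)} (hE : Ok w N E)
    (f : ℕ → ℕ) (P : ℕ → Prop)
    (hP : ∀ e ∈ E, P e.1 ∧ P e.2)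
    (hmono : ∀ a b, P a → P b → (a < b ↔ f a < f b))
    (hub : ∀ e ∈ E, f e.2 < N')
    (hw : ∀ a, P a → w' (f a) = w a) :
    Ok w' N' (E.image (fun p => (f p.1, f p.2))) := by
  obtain ⟨h1, h2, h3⟩ := hE
  have hinj : ∀ a b, P a → P b → f a = f b → a = b := by
    intro a b ha hb hfe
    rcases lt_trichotomy a b with h | h | h
    · exact absurd ((hmono a b ha hb).1 h) (by omega)
    · exact h
    · exact absurd ((hmono b a hb ha).1 h) (by omega)
  refine ⟨?_, ?_, ?_⟩
  · intro e' he'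
    obtain ⟨e, he, rfl⟩ := Finset.mem_image.1 he'
    obtain ⟨hp1, hp2⟩ := hP e he
    obtain ⟨a, b, c, d⟩ := h1 e he
    exact ⟨(hmono _ _ hp1 hp2).1 a, hub e he, by rw [hw _ hp1]; exact c, by rw [hw _ hp2]; exact d⟩
  · intro e' he' f' hf' hne
    obtain ⟨e, he, rfl⟩ := Finset.mem_image.1 he'
    obtain ⟨g, hg, rfl⟩ := Finset.mem_image.1 hf'
    have hne' : e ≠ g := by rintro rfl; exact hne rfl
    obtain ⟨a, b, c, d⟩ := h2 e he g hg hne'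
    obtain ⟨he1, he2⟩ := hP e he
    obtain ⟨hg1, hg2⟩ := hP g hg
    exact ⟨fun h => a (hinj _ _ he1 hg1 h), fun h => b (hinj _ _ he1 hg2 h),
      fun h => c (hinj _ _ he2 hg1 h), fun h => d (hinj _ _ he2 hg2 h)⟩
  · intro e' he' f' hf' hcr
    obtain ⟨e, he, rfl⟩ := Finset.mem_image.1 he'
    obtain ⟨g, hg, rfl⟩ := Finset.mem_image.1 hf'
    obtain ⟨he1, he2⟩ := hP e he
    obtain ⟨hg1, hg2⟩ := hP g hg
    refine h3 e he g hg ?_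
    unfold Cr at hcr ⊢
    rcases hcr with ⟨x, y, z⟩ | ⟨x, y, z⟩
    · exact Or.inl ⟨(hmono _ _ he1 hg1).2 x, (hmono _ _ hg1 he2).2 y, (hmono _ _ he2 hg2).2 z⟩
    · exact Or.inr ⟨(hmono _ _ hg1 he1).2 x, (hmono _ _ he1 hg2).2 y, (hmono _ _ hg2 he2).2 z⟩

lemma card_image_pairmap {E : Finset (ℕ × ℕ)} (f : ℕ → ℕ) (P : ℕ → Prop)
    (hP : ∀ e ∈ E, P e.1 ∧ P e.2)
    (hinj : ∀ a b, P a → P b → f a = f b → a = b) :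
    (E.image (fun p => (f p.1, f p.2))).card = E.card := by
  apply Finset.card_image_of_injOn
  intro e he g hg hfe
  obtain ⟨he1, he2⟩ := hP e he
  obtain ⟨hg1, hg2⟩ := hP g hg
  have h1 := congrArg Prod.fst hfe
  have h2 := congrArg Prod.snd hfe
  simp only at h1 h2
  exact Prod.ext (hinj _ _ he1 hg1 h1) (hinj _ _ he2 hg2 h2)

lemma coordsP {w N E} (hE : Ok w N E) (k : ℕ) (hk : ∀ e ∈ E, k ≤ e.1) :
    ∀ e ∈ E, k ≤ e.1 ∧ k ≤ e.2 := by
  intro e he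
  have := (hE.1 e he).1
  have := hk e he
  omega

lemma card_shift (w : ℕ → Bool) (N k m : ℕ) :
    ((Dset w (N + k) m).filter (fun E => ∀ e ∈ E, k ≤ e.1)).card
      = cnt (fun i => w (i + k)) N m := by
  apply Finset.card_nbij' (fun E => E.image (fun p => (p.1 - k, p.2 - k)))
    (fun E => E.image (fun p => (p.1 + k, p.2 + k)))
  · intro E hE
    simp only [mem_coe] at hE ⊢
    rw [mem_filter, mem_Dset] at hE
    obtain ⟨⟨hok, hcard⟩, hk⟩ := hE
    have hP := coordsP hok k hk
    rw [mem_Dset]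
    constructor
    · apply ok_image hok (fun a => a - k) (fun a => k ≤ a) hP
      · intro a b ha hb; omega
      · intro e he
        have := (hok.1 e he).2.1
        have := (hP e he).2
        omega
      · intro a ha
        have : a - k + k = a := by omega
        simp only [this]
    · rw [card_image_pairmap (fun a => a - k) (fun a => k ≤ a) hP (by intro a b ha hb; beta_reduce; omega)]
      exact hcard
  · intro E hE
    simp only [mem_coe] at hE ⊢
    rw [mem_Dset] at hE
    obtain ⟨hok, hcard⟩ := hE
    rw [mem_filter, mem_Dset]
    refine ⟨⟨?_, ?_⟩, ?_⟩
    · apply ok_image hok (fun a => a + k) (fun _ => True) (fun e he => ⟨trivial, trivial⟩)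
      · intro a b _ _; omega
      · intro e he
        have := (hok.1 e he).2.1
        omega
      · intro a _; rfl
    · rw [card_image_pairmap (fun a => a + k) (fun _ => True)
        (fun e he => ⟨trivial, trivial⟩) (by intro a b _ _; beta_reduce; omega)]
      exact hcard
    · intro e he
      obtain ⟨p, hp, rfl⟩ := Finset.mem_image.1 he
      simp only [le_add_iff_nonneg_left]
      omega
  · intro E hE
    simp only [mem_coe] at hE ⊢
    rw [mem_filter, mem_Dset] at hE
    obtain ⟨⟨hok, _⟩, hk⟩ := hE
    have hP := coordsP hok k hk
    rw [Finset.image_image]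
    rw [show ((fun p : ℕ × ℕ => (p.1 + k, p.2 + k)) ∘ fun p : ℕ × ℕ => (p.1 - k, p.2 - k))
        = fun p : ℕ × ℕ => (p.1 - k + k, p.2 - k + k) from rfl]
    rw [Finset.image_congr (g := id), Finset.image_id]
    intro p hp
    have h2 := hP p hp
    obtain ⟨x, y⟩ := p
    simp only [id, Prod.mk.injEq]
    omega
  · intro E hE
    simp only [mem_coe] at hE ⊢
    rw [Finset.image_image]
    rw [show ((fun p : ℕ × ℕ => (p.1 - k, p.2 - k)) ∘ fun p : ℕ × ℕ => (p.1 + k, p.2 + k))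
        = fun p : ℕ × ℕ => (p.1 + k - k, p.2 + k - k) from rfl]
    rw [Finset.image_congr (g := id), Finset.image_id]
    intro p hp
    obtain ⟨x, y⟩ := p
    simp only [id, Prod.mk.injEq]
    omega

lemma unmatched_card (w : ℕ → Bool) (N m : ℕ) :
    ((Dset w (N + 1) m).filter (fun E => ∀ e ∈ E, e.1 ≠ 0)).card
      = cnt (fun i => w (i + 1)) N m := by
  rw [← card_shift w N 1 m]
  congr 1
  apply Finset.filter_congr
  intro E _
  constructor
  · intro h e he; have := h e he; omega
  · intro h e he; have := h e he; omega

lemma cnt_headTrue {w : ℕ → Bool} {N : ℕ} (h : w 0 = true) (m : ℕ) :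
    cnt w (N + 1) m = cnt (fun i => w (i + 1)) N m := by
  rw [← unmatched_card]
  unfold cnt
  congr 1
  symm
  apply Finset.filter_true_of_mem
  intro E hE e he
  rw [mem_Dset] at hE
  have := (hE.1.1 e he).2.2.1
  intro h0
  rw [h0, h] at this
  exact Bool.noConfusion this

lemma ok_subset {w N} {E F : Finset (ℕ × ℕ)} (hok : Ok w N E) (h : F ⊆ E) : Ok w N F :=
  ⟨fun e he => hok.1 e (h he), fun e he f hf => hok.2.1 e (h he) f (h hf),
   fun e he f hf => hok.2.2 e (h he) f (h hf)⟩

lemma ok_union {w N} {E F : Finset (ℕ × ℕ)} (hE : Ok w N E) (hF : Ok w N F)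
    (hsep : ∀ e ∈ E, ∀ f ∈ F, e.2 < f.1) : Ok w N (E ∪ F) := by
  have key : ∀ e ∈ E, ∀ f ∈ F, (e ≠ f ∧ (e.1 ≠ f.1 ∧ e.1 ≠ f.2 ∧ e.2 ≠ f.1 ∧ e.2 ≠ f.2)
      ∧ ¬ Cr e f ∧ ¬ Cr f e) := by
    intro e he f hf
    have h1 := (hE.1 e he).1
    have h2 := (hF.1 f hf).1
    have h3 := hsep e he f hf
    refine ⟨?_, by omega, ?_, ?_⟩
    · intro h; rw [h] at h3; omega
    · unfold Cr; omega
    · unfold Cr; omega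
  refine ⟨?_, ?_, ?_⟩
  · intro e he
    rcases Finset.mem_union.1 he with h | h
    exacts [hE.1 e h, hF.1 e h]
  · intro e he f hf hne
    rcases Finset.mem_union.1 he with h | h <;> rcases Finset.mem_union.1 hf with h' | h'
    · exact hE.2.1 e h f h' hne
    · exact (key e h f h').2.1
    · have := (key f h' e h).2.1; omega
    · exact hF.2.1 e h f h' hne
  · intro e he f hf
    rcases Finset.mem_union.1 he with h | h <;> rcases Finset.mem_union.1 hf with h' | h'
    · exact hE.2.2 e h f h'
    · exact (key e h f h').2.2.1
    · exact (key f h' e h).2.2.2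
    · exact hF.2.2 e h f h'

lemma ok_insert {w N} {E : Finset (ℕ × ℕ)} (hE : Ok w N E) {a b : ℕ} (hab : a < b) (hb : b < N)
    (hwa : w a = false) (hwb : w b = true)
    (hnest : ∀ e ∈ E, (a < e.1 ∧ e.2 < b) ∨ b < e.1) : Ok w N (insert (a, b) E) := by
  have key : ∀ e ∈ E, ((a, b) ≠ e ∧ ((a,b).1 ≠ e.1 ∧ (a,b).1 ≠ e.2 ∧ (a,b).2 ≠ e.1 ∧ (a,b).2 ≠ e.2)
      ∧ ¬ Cr (a, b) e ∧ ¬ Cr e (a, b)) := by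
    intro e he
    have h1 := (hE.1 e he).1
    have h2 := hnest e he
    refine ⟨?_, ?_, ?_, ?_⟩
    · intro h
      have : a = e.1 ∧ b = e.2 := by
        constructor
        · exact congrArg Prod.fst h
        · exact congrArg Prod.snd h
      omega
    · simp only; omega
    · unfold Cr; simp only; omega
    · unfold Cr; simp only; omega
  refine ⟨?_, ?_, ?_⟩
  · intro e he
    rcases Finset.mem_insert.1 he with rfl | h
    · exact ⟨hab, hb, hwa, hwb⟩
    · exact hE.1 e h
  · intro e he f hf hne
    rcases Finset.mem_insert.1 he with rfl | h <;> rcases Finset.mem_insert.1 hf with rfl | h'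
    · exact absurd rfl hne
    · exact (key f h').2.1
    · have := (key e h).2.1; omega
    · exact hE.2.1 e h f h' hne
  · intro e he f hf
    rcases Finset.mem_insert.1 he with rfl | h <;> rcases Finset.mem_insert.1 hf with rfl | h'
    · unfold Cr; omega
    · exact (key f h').2.2.1
    · exact (key e h).2.2.2
    · exact hE.2.2 e h f h'

/-- classification of other edges relative to the edge `(0, c+1)` -/
lemma classify {w N E c} (hok : Ok w N E) (hc : (0, c + 1) ∈ E) :
    ∀ e ∈ E, e ≠ (0, c + 1) → (1 ≤ e.1 ∧ e.1 < e.2 ∧ e.2 ≤ c) ∨ (c + 2 ≤ e.1 ∧ e.1 < e.2) := by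
  intro e he hne
  have h1 := (hok.1 e he).1
  have h2 := hok.2.1 e he _ hc hne
  have h3 := hok.2.2 e he _ hc
  have h4 := hok.2.2 _ hc e he
  unfold Cr at h3 h4
  simp only at h2 h3 h4
  omega

/-- the key bijection: contractions containing the edge `(0, c+1)` correspond to pairs -/
lemma fixed_edge_card {w : ℕ → Bool} (hw0 : w 0 = false) {N c : ℕ} (hc : c < N)
    (hwc : w (c + 1) = true) (m : ℕ) :
    ((Dset w (N + 1) (m + 1)).filter (fun E => (0, c + 1) ∈ E)).card
      = (((Dall (fun i => w (i + 1)) c) ×ˢ (Dall (fun i => w (i + c + 2)) (N - 1 - c))).filter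
          (fun q => q.1.card + q.2.card = m)).card := by
  apply Finset.card_nbij'
    (fun E => ((E.filter (fun e => e.2 ≤ c)).image (fun p => (p.1 - 1, p.2 - 1)),
               (E.filter (fun e => c + 2 ≤ e.1)).image (fun p => (p.1 - (c+2), p.2 - (c+2)))))
    (fun q => insert (0, c + 1)
      ((q.1.image (fun p => (p.1 + 1, p.2 + 1))) ∪ (q.2.image (fun p => (p.1 + (c+2), p.2 + (c+2))))))
  · -- forward map lands in target
    intro E hE
    simp only [mem_coe] at hE ⊢
    rw [mem_filter, mem_Dset] at hE
    obtain ⟨⟨hok, hcard⟩, hmem⟩ := hE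
    have hcls := classify hok hmem
    -- coordinates facts for the two filters
    have hPin : ∀ e ∈ E.filter (fun e => e.2 ≤ c), 1 ≤ e.1 ∧ 1 ≤ e.2 := by
      intro e he
      rw [mem_filter] at he
      have hne : e ≠ (0, c + 1) := by
        intro h; rw [h] at he; omega
      have := hcls e he.1 hne
      omega
    have hPout : ∀ e ∈ E.filter (fun e => c + 2 ≤ e.1), c + 2 ≤ e.1 ∧ c + 2 ≤ e.2 := by
      intro e he
      rw [mem_filter] at he
      have := (hok.1 e he.1).1
      omega
    rw [mem_filter, mem_product, mem_Dall, mem_Dall]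
    refine ⟨⟨?_, ?_⟩, ?_⟩
    · -- inner Ok
      apply ok_image (ok_subset hok (filter_subset _ _)) (fun a => a - 1) (fun a => 1 ≤ a) hPin
      · intro a b ha hb; omega
      · intro e he
        have := hPin e he
        rw [mem_filter] at he
        omega
      · intro a ha
        have : a - 1 + 1 = a := by omega
        simp only [this]
    · -- outer Ok
      apply ok_image (ok_subset hok (filter_subset _ _)) (fun a => a - (c+2))
        (fun a => c + 2 ≤ a) hPout
      · intro a b ha hb; omega
      · intro e he
        have h1 := hPout e he
        rw [mem_filter] at he
        have := (hok.1 e he.1).2.1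
        omega
      · intro a ha
        show w (a - (c + 2) + c + 2) = w a
        rw [show a - (c + 2) + c + 2 = a by omega]
    · -- cards add up
      simp only
      rw [card_image_pairmap (fun a => a - 1) (fun a => 1 ≤ a) hPin (by intro a b ha hb; beta_reduce; omega),
          card_image_pairmap (fun a => a - (c+2)) (fun a => c + 2 ≤ a) hPout (by intro a b ha hb; beta_reduce; omega)]
      -- partition of E
      have hsplit : E.filter (fun e => ¬ e.2 ≤ c) = insert (0, c + 1) (E.filter (fun e => c + 2 ≤ e.1)) := by
        ext e
        rw [mem_filter, mem_insert, mem_filter]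
        constructor
        · rintro ⟨he, h2⟩
          by_cases hne : e = (0, c + 1)
          · exact Or.inl hne
          · rcases hcls e he hne with h | h
            · omega
            · exact Or.inr ⟨he, h.1⟩
        · rintro (rfl | ⟨he, h⟩)
          · exact ⟨hmem, by omega⟩
          · have := (hok.1 e he).1
            exact ⟨he, by omega⟩
      have h0 : (0, c + 1) ∉ E.filter (fun e => c + 2 ≤ e.1) := by
        rw [mem_filter]; rintro ⟨_, h⟩; simp at h
      have := Finset.card_filter_add_card_filter_not (s := E) (p := fun e => e.2 ≤ c)
      rw [hsplit, Finset.card_insert_of_notMem h0] at this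
      omega
  · -- backward map lands in source
    rintro ⟨E1, E2⟩ hq
    simp only [mem_coe] at hq ⊢
    rw [mem_filter, mem_product, mem_Dall, mem_Dall] at hq
    obtain ⟨⟨hok1, hok2⟩, hcards⟩ := hq
    simp only at hok1 hok2 hcards ⊢
    have hA : Ok w (N + 1) (E1.image (fun p => (p.1 + 1, p.2 + 1))) := by
      apply ok_image hok1 (fun a => a + 1) (fun _ => True) (fun e he => ⟨trivial, trivial⟩)
      · intro a b _ _; omega
      · intro e he
        have := (hok1.1 e he).2.1
        omega
      · intro a _; rfl
    have hB : Ok w (N + 1) (E2.image (fun p => (p.1 + (c+2), p.2 + (c+2)))) := by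
      apply ok_image hok2 (fun a => a + (c+2)) (fun _ => True) (fun e he => ⟨trivial, trivial⟩)
      · intro a b _ _; omega
      · intro e he
        have := (hok2.1 e he).2.1
        omega
      · intro a _
        show w (a + (c + 2)) = w (a + c + 2)
        rw [show a + (c + 2) = a + c + 2 by omega]
    have hAmem : ∀ e ∈ E1.image (fun p : ℕ×ℕ => (p.1 + 1, p.2 + 1)), 1 ≤ e.1 ∧ e.2 ≤ c := by
      intro e he
      obtain ⟨p, hp, rfl⟩ := mem_image.1 he
      have h1 := (hok1.1 p hp).1
      have h2 := (hok1.1 p hp).2.1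
      simp only
      omega
    have hBmem : ∀ e ∈ E2.image (fun p : ℕ×ℕ => (p.1 + (c+2), p.2 + (c+2))), c + 2 ≤ e.1 := by
      intro e he
      obtain ⟨p, hp, rfl⟩ := mem_image.1 he
      simp only
      omega
    rw [mem_filter, mem_Dset]
    refine ⟨⟨?_, ?_⟩, ?_⟩
    · apply ok_insert
      · apply ok_union hA hB
        intro e he f hf
        have h1 := hAmem e he
        have h2 := hBmem f hf
        have := (hA.1 e he).1
        omega
      · omega
      · omega
      · exact hw0
      · exact hwc
      · intro e he
        rcases mem_union.1 he with h | h
        · have := hAmem e h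
          have := (hA.1 e h).1
          left; omega
        · have := hBmem e h
          right; omega
    · rw [Finset.card_insert_of_notMem, Finset.card_union_of_disjoint]
      · rw [card_image_pairmap (fun a => a + 1) (fun _ => True) (fun e he => ⟨trivial, trivial⟩) (by intro a b _ _; beta_reduce; omega),
            card_image_pairmap (fun a => a + (c+2)) (fun _ => True) (fun e he => ⟨trivial, trivial⟩) (by intro a b _ _; beta_reduce; omega)]
        omega
      · rw [Finset.disjoint_left]
        intro e he hf
        have := hAmem e he
        have := hBmem e hf
        have := (hA.1 e he).1
        omega
      · rw [mem_union]
        rintro (h | h)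
        · obtain ⟨p, hp, hpe⟩ := mem_image.1 h
          have := congrArg Prod.fst hpe
          simp only at this
          omega
        · obtain ⟨p, hp, hpe⟩ := mem_image.1 h
          have := congrArg Prod.fst hpe
          simp only at this
          omega
    · exact mem_insert_self _ _
  · -- left inverse
    intro E hE
    rw [mem_coe] at hE
    rw [mem_filter, mem_Dset] at hE
    obtain ⟨⟨hok, hcard⟩, hmem⟩ := hE
    have hcls := classify hok hmem
    simp only
    rw [Finset.image_image, Finset.image_image]
    have e1 : ((E.filter (fun e => e.2 ≤ c)).image
        ((fun p : ℕ×ℕ => (p.1 + 1, p.2 + 1)) ∘ (fun p : ℕ×ℕ => (p.1 - 1, p.2 - 1))))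
        = E.filter (fun e => e.2 ≤ c) := by
      rw [Finset.image_congr (g := id), Finset.image_id]
      intro p hp
      rw [mem_coe, mem_filter] at hp
      have hne : p ≠ (0, c + 1) := by intro h; rw [h] at hp; omega
      have := hcls p hp.1 hne
      obtain ⟨x, y⟩ := p
      simp only [id, Function.comp_apply, Prod.mk.injEq]
      omega
    have e2 : ((E.filter (fun e => c + 2 ≤ e.1)).image
        ((fun p : ℕ×ℕ => (p.1 + (c+2), p.2 + (c+2))) ∘ (fun p : ℕ×ℕ => (p.1 - (c+2), p.2 - (c+2)))))
        = E.filter (fun e => c + 2 ≤ e.1) := by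
      rw [Finset.image_congr (g := id), Finset.image_id]
      intro p hp
      rw [mem_coe, mem_filter] at hp
      have := (hok.1 p hp.1).1
      obtain ⟨x, y⟩ := p
      simp only [id, Function.comp_apply, Prod.mk.injEq]
      omega
    rw [e1, e2]
    -- now show insert (0,c+1) (filter ∪ filter) = E
    ext e
    rw [mem_insert, mem_union, mem_filter, mem_filter]
    constructor
    · rintro (rfl | ⟨he, _⟩ | ⟨he, _⟩) <;> first | exact hmem | exact he
    · intro he
      by_cases hne : e = (0, c + 1)
      · exact Or.inl hne
      · rcases hcls e he hne with h | h
        · exact Or.inr (Or.inl ⟨he, h.2.2⟩)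
        · exact Or.inr (Or.inr ⟨he, h.1⟩)
  · -- right inverse
    rintro ⟨E1, E2⟩ hq
    rw [mem_coe] at hq
    rw [mem_filter, mem_product, mem_Dall, mem_Dall] at hq
    obtain ⟨⟨hok1, hok2⟩, hcards⟩ := hq
    simp only at hok1 hok2 ⊢
    have hf1 : (insert (0, c + 1)
        ((E1.image (fun p : ℕ×ℕ => (p.1 + 1, p.2 + 1))) ∪
         (E2.image (fun p : ℕ×ℕ => (p.1 + (c+2), p.2 + (c+2)))))).filter (fun e => e.2 ≤ c)
        = E1.image (fun p : ℕ×ℕ => (p.1 + 1, p.2 + 1)) := by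
      ext e
      rw [mem_filter, mem_insert, mem_union]
      constructor
      · rintro ⟨rfl | h | h, h2⟩
        · omega
        · exact h
        · obtain ⟨p, hp, rfl⟩ := mem_image.1 h
          simp only at h2
          omega
      · intro h
        obtain ⟨p, hp, rfl⟩ := mem_image.1 h
        have := (hok1.1 p hp).2.1
        exact ⟨Or.inr (Or.inl h), by simp only; omega⟩
    have hf2 : (insert (0, c + 1)
        ((E1.image (fun p : ℕ×ℕ => (p.1 + 1, p.2 + 1))) ∪
         (E2.image (fun p : ℕ×ℕ => (p.1 + (c+2), p.2 + (c+2)))))).filter (fun e => c + 2 ≤ e.1)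
        = E2.image (fun p : ℕ×ℕ => (p.1 + (c+2), p.2 + (c+2))) := by
      ext e
      rw [mem_filter, mem_insert, mem_union]
      constructor
      · rintro ⟨rfl | h | h, h2⟩
        · omega
        · obtain ⟨p, hp, rfl⟩ := mem_image.1 h
          have := (hok1.1 p hp).2.1
          have := (hok1.1 p hp).1
          simp only at h2
          omega
        · exact h
      · intro h
        obtain ⟨p, hp, rfl⟩ := mem_image.1 h
        exact ⟨Or.inr (Or.inr h), by simp only; omega⟩
    rw [hf1, hf2, Finset.image_image, Finset.image_image]
    have g1 : (E1.image ((fun p : ℕ×ℕ => (p.1 - 1, p.2 - 1)) ∘ (fun p : ℕ×ℕ => (p.1 + 1, p.2 + 1)))) = E1 := by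
      rw [Finset.image_congr (g := id), Finset.image_id]
      intro p hp
      obtain ⟨x, y⟩ := p
      simp only [id, Function.comp_apply, Prod.mk.injEq]
      omega
    have g2 : (E2.image ((fun p : ℕ×ℕ => (p.1 - (c+2), p.2 - (c+2))) ∘ (fun p : ℕ×ℕ => (p.1 + (c+2), p.2 + (c+2))))) = E2 := by
      rw [Finset.image_congr (g := id), Finset.image_id]
      intro p hp
      obtain ⟨x, y⟩ := p
      simp only [id, Function.comp_apply, Prod.mk.injEq]
      omega
    rw [g1, g2]

/-- cardinality of the filtered product as a convolution -/
lemma card_pairs (w1 w2 : ℕ → Bool) (N1 N2 m : ℕ) :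
    (((Dall w1 N1) ×ˢ (Dall w2 N2)).filter (fun q => q.1.card + q.2.card = m)).card
      = ∑ p ∈ Finset.HasAntidiagonal.antidiagonal m, cnt w1 N1 p.1 * cnt w2 N2 p.2 := by
  rw [Finset.card_eq_sum_card_fiberwise
    (f := fun q : Finset (ℕ×ℕ) × Finset (ℕ×ℕ) => (q.1.card, q.2.card))
    (t := Finset.HasAntidiagonal.antidiagonal m)
    (fun q hq => by
      rw [mem_coe, mem_filter] at hq
      rw [mem_coe]
      exact Finset.HasAntidiagonal.mem_antidiagonal.2 hq.2)]
  apply Finset.sum_congr rfl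
  intro p hp
  have hpm := Finset.HasAntidiagonal.mem_antidiagonal.1 hp
  have : (((Dall w1 N1) ×ˢ (Dall w2 N2)).filter (fun q => q.1.card + q.2.card = m)).filter
      (fun q => (q.1.card, q.2.card) = p) = (Dset w1 N1 p.1) ×ˢ (Dset w2 N2 p.2) := by
    ext q
    rw [mem_filter, mem_filter, mem_product, mem_product, mem_Dset, mem_Dset,
      mem_Dall, mem_Dall, Prod.mk.injEq]
    constructor
    · rintro ⟨⟨⟨a, b⟩, _⟩, c, d⟩
      exact ⟨⟨a, c⟩, b, d⟩
    · rintro ⟨⟨a, c⟩, b, d⟩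
      exact ⟨⟨⟨a, b⟩, by omega⟩, c, d⟩
  rw [this, Finset.card_product]
  rfl

/-- main recursion: decomposition at the first position (a white vertex) -/
theorem cnt_rec {w : ℕ → Bool} (hw : w 0 = false) (N m : ℕ) :
    cnt w (N + 1) m
      = cnt (fun i => w (i + 1)) N m
        + ∑ c ∈ range N, (if w (c + 1) = true ∧ 1 ≤ m then
            ∑ p ∈ Finset.HasAntidiagonal.antidiagonal (m - 1),
              cnt (fun i => w (i + 1)) c p.1 * cnt (fun i => w (i + c + 2)) (N - 1 - c) p.2
          else 0) := by
  have hpart := Finset.card_filter_add_card_filter_not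
    (s := Dset w (N + 1) m) (p := fun E => ∀ e ∈ E, e.1 ≠ 0)
  rw [show cnt w (N+1) m = (Dset w (N+1) m).card from rfl, ← hpart, unmatched_card]
  congr 1
  -- now the matched part
  set s := (Dset w (N + 1) m).filter (fun E => ¬ ∀ e ∈ E, e.1 ≠ 0) with hs
  -- the partner function
  have key : ∀ E ∈ s, ∃ q, (0, q + 1) ∈ E ∧ q < N ∧
      (E.filter (fun e => e.1 = 0)) = {(0, q + 1)} := by
    intro E hE
    rw [hs, mem_filter, mem_Dset] at hE
    obtain ⟨⟨hok, hcard⟩, hex⟩ := hE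
    push_neg at hex
    obtain ⟨e, he, he0⟩ := hex
    have h1 := (hok.1 e he).1
    have h2 := (hok.1 e he).2.1
    have heq : e = (0, e.2 - 1 + 1) := by
      obtain ⟨x, y⟩ := e
      simp only at he0 h1 ⊢
      rw [Prod.mk.injEq]
      omega
    refine ⟨e.2 - 1, by rw [← heq]; exact he, by omega, ?_⟩
    ext f
    rw [mem_filter, mem_singleton]
    constructor
    · rintro ⟨hf, hf0⟩
      rw [← heq]
      by_contra hne
      exact (hok.2.1 f hf e he hne).1 (by rw [hf0, he0])
    · rintro rfl
      exact ⟨by rw [← heq]; exact he, rfl⟩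
  rw [Finset.card_eq_sum_card_fiberwise
    (f := fun E => (E.filter (fun e => e.1 = 0)).sum (fun e => e.2) - 1)
    (t := range N)
    (fun E hE => by
      obtain ⟨q, hq1, hq2, hq3⟩ := key E hE
      beta_reduce
      rw [hq3, Finset.sum_singleton]
      simp only
      rw [mem_coe, mem_range]
      omega)]
  apply Finset.sum_congr rfl
  intro c hc
  rw [mem_range] at hc
  -- fiber = contractions containing (0, c+1)
  have hfib : s.filter (fun E => (E.filter (fun e => e.1 = 0)).sum (fun e => e.2) - 1 = c)
      = (Dset w (N + 1) m).filter (fun E => (0, c + 1) ∈ E) := by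
    ext E
    constructor
    · intro hE
      rw [mem_filter] at hE
      obtain ⟨hEs, hEc⟩ := hE
      obtain ⟨q, hq1, hq2, hq3⟩ := key E hEs
      rw [hq3, Finset.sum_singleton] at hEc
      simp only at hEc
      rw [mem_filter]
      rw [hs, mem_filter] at hEs
      refine ⟨hEs.1, ?_⟩
      rw [show c = q by omega]
      exact hq1
    · intro hE
      rw [mem_filter] at hE
      obtain ⟨hED, hEc⟩ := hE
      have hEs : E ∈ s := by
        rw [hs, mem_filter]
        refine ⟨hED, ?_⟩
        push_neg
        exact ⟨(0, c + 1), hEc, rfl⟩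
      obtain ⟨q, hq1, hq2, hq3⟩ := key E hEs
      have : (0, c + 1) ∈ E.filter (fun e => e.1 = 0) := by
        rw [mem_filter]; exact ⟨hEc, rfl⟩
      rw [hq3, mem_singleton, Prod.mk.injEq] at this
      rw [mem_filter]
      refine ⟨hEs, ?_⟩
      rw [hq3, Finset.sum_singleton]
      simp only
      omega
  rw [hfib]
  -- now compute the fiber cardinality
  by_cases hcond : w (c + 1) = true ∧ 1 ≤ m
  · rw [if_pos hcond]
    obtain ⟨hwc, hm⟩ := hcond
    obtain ⟨m', rfl⟩ : ∃ m', m = m' + 1 := ⟨m - 1, by omega⟩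
    rw [fixed_edge_card hw hc hwc m', card_pairs]
    simp only [Nat.add_sub_cancel]
  · rw [if_neg hcond]
    rw [Finset.card_eq_zero, Finset.eq_empty_iff_forall_notMem]
    intro E hE
    rw [mem_filter, mem_Dset] at hE
    obtain ⟨⟨hok, hcard⟩, hmem⟩ := hE
    have h1 := (hok.1 _ hmem).2.2.2
    have h2 : 1 ≤ E.card := Finset.card_pos.2 ⟨_, hmem⟩
    simp only at h1
    exact hcond ⟨h1, by omega⟩

/-- the infinite pattern word -/
def W (r : ℕ) : ℕ → Bool := fun i => decide (i % (r + 1) = r)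

lemma W_period (r i j : ℕ) : W r (i + (r + 1) * j) = W r i := by
  unfold W
  rw [Nat.add_mul_mod_self_left]

lemma W_true (r : ℕ) : W r r = true := by
  unfold W
  simp [Nat.mod_eq_of_lt (by omega : r < r + 1)]

lemma W_false {r d : ℕ} (hd : d < r) : W r d = false := by
  unfold W
  simp [Nat.mod_eq_of_lt (by omega : d < r + 1)]
  omega

/-- counts for the suffix of the pattern starting at offset `d`, containing `n` blacks -/
def g (r d n m : ℕ) : ℕ := cnt (fun i => W r (i + d)) ((r + 1) * n - d) m

lemma g_zero (r d m : ℕ) : g r d 0 m = if m = 0 then 1 else 0 := by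
  unfold g
  rw [show (r + 1) * 0 - d = 0 by omega]
  exact cnt_zero _ m

lemma g_r (r n m : ℕ) (hn : 1 ≤ n) : g r r n m = g r 0 (n - 1) m := by
  obtain ⟨k, rfl⟩ : ∃ k, n = k + 1 := ⟨n - 1, by omega⟩
  unfold g
  have key : (r + 1) * (k + 1) = (r + 1) * k + (r + 1) := by ring
  rw [show k + 1 - 1 = k from rfl]
  rw [show (r + 1) * (k + 1) - r = ((r + 1) * k) + 1 by omega]
  rw [cnt_headTrue (by simpa using W_true r) m]
  apply cnt_congr
  intro i _
  rw [show i + 1 + r = i + (r + 1) * 1 by ring, W_period, show i + 0 = i from rfl]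

lemma g_rec (r d n m : ℕ) (hd : d < r) (hn : 1 ≤ n) :
    g r d n m = g r (d + 1) n m
      + (if 1 ≤ m then
          ∑ j ∈ range n, ∑ p ∈ Finset.HasAntidiagonal.antidiagonal (m - 1),
            g r (d + 1) j p.1 * g r 0 (n - 1 - j) p.2
        else 0) := by
  have hmul : (r + 1) * 1 ≤ (r + 1) * n := Nat.mul_le_mul_left _ hn
  have hN : (r + 1) * n - d = ((r + 1) * n - d - 1) + 1 := by omega
  set N := (r + 1) * n - d - 1 with hNdef
  unfold g
  rw [hN, cnt_rec (by simpa using W_false hd) N m]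
  congr 1
  · -- the unmatched part
    rw [show (r + 1) * n - (d + 1) = N by omega]
    apply cnt_congr
    intro i _
    rw [show i + 1 + d = i + (d + 1) by ring]
  · -- the matched part
    by_cases hm : 1 ≤ m
    · rw [if_pos hm]
      have hsimp : ∀ c ∈ range N, (if W r (c + 1 + d) = true ∧ 1 ≤ m then
            ∑ p ∈ Finset.HasAntidiagonal.antidiagonal (m - 1),
              cnt (fun i => W r (i + 1 + d)) c p.1 * cnt (fun i => W r (i + c + 2 + d)) (N - 1 - c) p.2
          else 0) = (if W r (c + 1 + d) = true then
            ∑ p ∈ Finset.HasAntidiagonal.antidiagonal (m - 1),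
              cnt (fun i => W r (i + 1 + d)) c p.1 * cnt (fun i => W r (i + c + 2 + d)) (N - 1 - c) p.2
          else 0) := by
        intro c _
        by_cases h : W r (c + 1 + d) = true
        · rw [if_pos ⟨h, hm⟩, if_pos h]
        · rw [if_neg (fun hh => h hh.1), if_neg h]
      rw [Finset.sum_congr rfl hsimp]
      rw [← Finset.sum_filter]
      have hset : (range N).filter (fun c => W r (c + 1 + d) = true)
          = (range n).image (fun j => (r + 1) * j + r - d - 1) := by
        ext c
        rw [mem_filter, mem_range, Finset.mem_image]
        constructor
        · rintro ⟨hcN, hW⟩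
          unfold W at hW
          rw [decide_eq_true_iff] at hW
          have hdm := Nat.div_add_mod (c + 1 + d) (r + 1)
          rw [hW] at hdm
          set q := (c + 1 + d) / (r + 1) with hq
          refine ⟨q, ?_, ?_⟩
          · rw [mem_range]
            by_contra hqn
            push_neg at hqn
            have : (r + 1) * n ≤ (r + 1) * q := Nat.mul_le_mul_left _ hqn
            omega
          · beta_reduce; omega
        · rintro ⟨j, hj, rfl⟩
          rw [mem_range] at hj
          have hj1 : j + 1 ≤ n := hj
          have : (r + 1) * (j + 1) ≤ (r + 1) * n := Nat.mul_le_mul_left _ hj1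
          have hkey : (r + 1) * (j + 1) = (r + 1) * j + (r + 1) := by ring
          constructor
          · omega
          · unfold W
            rw [decide_eq_true_iff]
            rw [show (r + 1) * j + r - d - 1 + 1 + d = r + (r + 1) * j by omega]
            rw [Nat.add_mul_mod_self_left, Nat.mod_eq_of_lt (by omega)]
      have hinj : ∀ x ∈ range n, ∀ y ∈ range n,
          (fun j => (r + 1) * j + r - d - 1) x = (fun j => (r + 1) * j + r - d - 1) y → x = y := by
        intro x hx y hy hxy
        have h1 : (r + 1) * x + r - d - 1 = (r + 1) * y + r - d - 1 := hxy
        have h2 : (r + 1) * x = (r + 1) * y := by omega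
        exact Nat.eq_of_mul_eq_mul_left (by omega) h2
      rw [hset, Finset.sum_image hinj]
      apply Finset.sum_congr rfl
      intro j hj
      rw [mem_range] at hj
      have hj1 : (r + 1) * (j + 1) ≤ (r + 1) * n := Nat.mul_le_mul_left _ hj
      have hk1 : (r + 1) * (j + 1) = (r + 1) * j + (r + 1) := by ring
      have hk2 : (r + 1) * n = (r + 1) * j + (r + 1) * (n - 1 - j) + (r + 1) := by
        rw [show (r + 1) * j + (r + 1) * (n - 1 - j) + (r + 1) = (r + 1) * (j + (n - 1 - j) + 1) by ring]
        congr 1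
        omega
      apply Finset.sum_congr rfl
      intro p _
      congr 1
      · -- inner factor
        rw [cnt_deadTail (show (r + 1) * j - (d + 1) ≤ (r + 1) * j + r - d - 1 by omega)
          (by
            intro i hi1 hi2
            have hx : i + 1 + d = (i + 1 + d - (r + 1) * j) + (r + 1) * j := by omega
            have hx2 : i + 1 + d - (r + 1) * j < r := by omega
            show W r (i + 1 + d) = false
            rw [hx, show (i + 1 + d - (r + 1) * j) + (r + 1) * j
                = (i + 1 + d - (r + 1) * j) + (r + 1) * j from rfl]
            rw [show ((i + 1 + d - (r + 1) * j) + (r + 1) * j) = ((i + 1 + d - (r + 1) * j) + (r + 1) * j) from rfl]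
            rw [W_period r (i + 1 + d - (r + 1) * j) j]
            exact W_false hx2) p.1]
        apply cnt_congr
        intro i _
        rw [show i + 1 + d = i + (d + 1) by ring]
      · -- outer factor
        rw [show N - 1 - ((r + 1) * j + r - d - 1) = (r + 1) * (n - 1 - j) - 0 by omega]
        apply cnt_congr
        intro i _
        rw [show i + ((r + 1) * j + r - d - 1) + 2 + d = i + (r + 1) * (j + 1) by omega]
        rw [W_period]
        rw [show i + 0 = i from rfl]
    · rw [if_neg hm]
      apply Finset.sum_eq_zero
      intro c _
      rw [if_neg (fun hh => hm hh.2)]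

instance {N : ℕ} (e f : Fin N × Fin N) : Decidable (Crosses e f) := by
  unfold Crosses; infer_instance
instance {N : ℕ} (w : Fin N → Bool) (E : Finset (Fin N × Fin N)) :
    Decidable (IsContraction w E) := by unfold IsContraction; infer_instance
instance {N : ℕ} (E : Finset (Fin N × Fin N)) : Decidable (IsNoncrossing E) := by
  unfold IsNoncrossing; infer_instance

lemma ncCount_eq_filter {N : ℕ} (w : Fin N → Bool) (m : ℕ) :
    ncCount w m = (univ.filter (fun E : Finset (Fin N × Fin N) =>
      IsContraction w E ∧ IsNoncrossing E ∧ E.card = m)).card := by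
  rw [ncCount, Nat.card_eq_fintype_card, Fintype.card_subtype]

lemma transfer {N : ℕ} (w : Fin N → Bool) (w' : ℕ → Bool)
    (hw : ∀ i : Fin N, w' i.1 = w i) (m : ℕ) :
    ncCount w m = cnt w' N m := by
  rcases Nat.eq_zero_or_pos N with rfl | hN
  · rw [cnt_zero, ncCount_eq_filter]
    have : ∀ E : Finset (Fin 0 × Fin 0), E = ∅ := fun E => Finset.eq_empty_of_isEmpty E
    split <;> rename_i hm
    · subst hm
      have huniv : (univ.filter (fun E : Finset (Fin 0 × Fin 0) =>
          IsContraction w E ∧ IsNoncrossing E ∧ E.card = 0)) = {(∅ : Finset (Fin 0 × Fin 0))} := by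
        ext E
        rw [mem_filter, mem_singleton]
        constructor
        · intro _; exact this E
        · rintro rfl
          refine ⟨mem_univ _, ⟨?_, ?_⟩, ?_, rfl⟩ <;> intro e he <;>
            exact absurd he (notMem_empty e)
      rw [huniv, card_singleton]
    · rw [Finset.card_eq_zero, Finset.eq_empty_iff_forall_notMem]
      intro E hE
      rw [mem_filter] at hE
      have hc := hE.2.2.2
      rw [this E] at hc
      simp only [card_empty] at hc
      exact hm hc.symm
  · rw [ncCount_eq_filter]
    apply Finset.card_nbij' (fun E => E.image (fun p => (p.1.1, p.2.1)))
      (fun E => E.image (fun p => ((⟨p.1 % N, Nat.mod_lt _ hN⟩ : Fin N),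
        (⟨p.2 % N, Nat.mod_lt _ hN⟩ : Fin N))))
    · -- forward
      intro E hE
      simp only [mem_coe] at hE ⊢
      rw [mem_filter] at hE
      obtain ⟨_, hctr, hnc, hcard⟩ := hE
      have hinj : Function.Injective (fun p : Fin N × Fin N => (p.1.1, p.2.1)) := by
        intro p q h
        have h1 := congrArg Prod.fst h
        have h2 := congrArg Prod.snd h
        simp only at h1 h2
        exact Prod.ext (Fin.val_injective h1) (Fin.val_injective h2)
      rw [mem_Dset]
      refine ⟨⟨?_, ?_, ?_⟩, ?_⟩
      · intro e' he'
        obtain ⟨p, hp, rfl⟩ := mem_image.1 he'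
        obtain ⟨hlt, hwf, hwt⟩ := hctr.1 p hp
        exact ⟨by exact hlt, p.2.isLt, by rw [hw]; exact hwf, by rw [hw]; exact hwt⟩
      · intro e' he' f' hf' hne
        obtain ⟨p, hp, rfl⟩ := mem_image.1 he'
        obtain ⟨q, hq, rfl⟩ := mem_image.1 hf'
        have hpq : p ≠ q := fun h => hne (by rw [h])
        obtain ⟨a, b, c, d⟩ := hctr.2 p hp q hq hpq
        simp only [ne_eq]
        refine ⟨fun h => a (Fin.val_injective h), fun h => b (Fin.val_injective h),
          fun h => c (Fin.val_injective h), fun h => d (Fin.val_injective h)⟩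
      · intro e' he' f' hf'
        obtain ⟨p, hp, rfl⟩ := mem_image.1 he'
        obtain ⟨q, hq, rfl⟩ := mem_image.1 hf'
        intro hcr
        apply hnc p hp q hq
        unfold Crosses
        unfold Cr at hcr
        simp only [Fin.lt_def]
        exact hcr
      · rw [Finset.card_image_of_injective _ hinj]
        exact hcard
    · -- backward
      intro E hE
      simp only [mem_coe] at hE ⊢
      rw [mem_Dset] at hE
      obtain ⟨hok, hcard⟩ := hE
      have hb : ∀ e ∈ E, e.1 < N ∧ e.2 < N := by
        intro e he
        have := (hok.1 e he).1
        have := (hok.1 e he).2.1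
        omega
      have hval : ∀ e ∈ E, (e.1 % N = e.1 ∧ e.2 % N = e.2) := by
        intro e he
        have := hb e he
        exact ⟨Nat.mod_eq_of_lt this.1, Nat.mod_eq_of_lt this.2⟩
      rw [mem_filter]
      refine ⟨mem_univ _, ⟨?_, ?_⟩, ?_, ?_⟩
      · intro e' he'
        obtain ⟨p, hp, rfl⟩ := mem_image.1 he'
        obtain ⟨h1, h2, h3, h4⟩ := hok.1 p hp
        have hv := hval p hp
        refine ⟨?_, ?_, ?_⟩
        · rw [Fin.lt_def]; simp only; omega
        · rw [← hw]; simp only; rw [hv.1]; exact h3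
        · rw [← hw]; simp only; rw [hv.2]; exact h4
      · intro e' he' f' hf' hne
        obtain ⟨p, hp, rfl⟩ := mem_image.1 he'
        obtain ⟨q, hq, rfl⟩ := mem_image.1 hf'
        have hvp := hval p hp
        have hvq := hval q hq
        have hpq : p ≠ q := fun h => hne (by rw [h])
        obtain ⟨a, b, c, d⟩ := hok.2.1 p hp q hq hpq
        simp only [ne_eq, Prod.mk.injEq, Fin.mk.injEq]
        refine ⟨by omega, by omega, by omega, by omega⟩
      · intro e' he' f' hf'
        obtain ⟨p, hp, rfl⟩ := mem_image.1 he'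
        obtain ⟨q, hq, rfl⟩ := mem_image.1 hf'
        have hvp := hval p hp
        have hvq := hval q hq
        intro hcr
        apply hok.2.2 p hp q hq
        unfold Crosses at hcr
        unfold Cr
        simp only [Fin.lt_def] at hcr
        omega
      · rw [Finset.card_image_of_injOn]
        · exact hcard
        · intro p hp q hq h
          have hvp := hval p hp
          have hvq := hval q hq
          have h1 := congrArg (fun x : Fin N × Fin N => x.1.1) h
          have h2 := congrArg (fun x : Fin N × Fin N => x.2.1) h
          simp only at h1 h2
          exact Prod.ext (by omega) (by omega)
    · -- left inverse
      intro E hE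
      simp only [mem_coe] at hE ⊢
      rw [Finset.image_image]
      rw [Finset.image_congr (g := id), Finset.image_id]
      intro p hp
      obtain ⟨x, y⟩ := p
      simp only [id, Function.comp_apply, Prod.mk.injEq]
      constructor
      · apply Fin.ext; simp only; exact Nat.mod_eq_of_lt x.isLt
      · apply Fin.ext; simp only; exact Nat.mod_eq_of_lt y.isLt
    · -- right inverse
      intro E hE
      simp only [mem_coe] at hE ⊢
      rw [mem_Dset] at hE
      obtain ⟨hok, _⟩ := hE
      rw [Finset.image_image]
      rw [Finset.image_congr (g := id), Finset.image_id]
      intro p hp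
      rw [mem_coe] at hp
      have h1 := (hok.1 p hp).1
      have h2 := (hok.1 p hp).2.1
      obtain ⟨x, y⟩ := p
      simp only [id, Function.comp_apply, Prod.mk.injEq]
      simp only at h1 h2
      constructor
      · exact Nat.mod_eq_of_lt (by omega)
      · exact Nat.mod_eq_of_lt (by omega)

noncomputable abbrev s0 (n : ℕ) : Fin 2 →₀ ℕ := Finsupp.single 0 n
noncomputable abbrev s1 (m : ℕ) : Fin 2 →₀ ℕ := Finsupp.single 1 m

lemma apply_idx0 (n m : ℕ) : (s0 n + s1 m) 0 = n := by
  simp [Finsupp.single_apply]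
lemma apply_idx1 (n m : ℕ) : (s0 n + s1 m) 1 = m := by
  simp [Finsupp.single_apply]

lemma fin2_decomp (u : Fin 2 →₀ ℕ) : s0 (u 0) + s1 (u 1) = u := by
  ext a
  fin_cases a <;> simp [Finsupp.single_apply]

lemma idx_eq_zero_iff (n m : ℕ) : (s0 n + s1 m) = 0 ↔ n = 0 ∧ m = 0 := by
  constructor
  · intro h
    have h0 := congrArg (fun u : Fin 2 →₀ ℕ => u 0) h
    have h1 := congrArg (fun u : Fin 2 →₀ ℕ => u 1) h
    simp only [apply_idx0, apply_idx1, Finsupp.coe_zero, Pi.zero_apply] at h0 h1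
    exact ⟨h0, h1⟩
  · rintro ⟨rfl, rfl⟩
    simp

/-- coefficient of a product as a double convolution -/
lemma coeff_mul2 (φ ψ : MvPowerSeries (Fin 2) ℤ) (n m : ℕ) :
    coeff (s0 n + s1 m) (φ * ψ)
      = ∑ p ∈ Finset.HasAntidiagonal.antidiagonal n, ∑ q ∈ Finset.HasAntidiagonal.antidiagonal m,
          coeff (s0 p.1 + s1 q.1) φ * coeff (s0 p.2 + s1 q.2) ψ := by
  classical
  rw [coeff_mul]
  rw [← Finset.sum_product']
  apply Finset.sum_nbij' (i := fun pq : (Fin 2 →₀ ℕ) × (Fin 2 →₀ ℕ) =>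
      ((pq.1 0, pq.2 0), (pq.1 1, pq.2 1)))
    (j := fun ab : (ℕ × ℕ) × (ℕ × ℕ) => (s0 ab.1.1 + s1 ab.2.1, s0 ab.1.2 + s1 ab.2.2))
  · intro pq hpq
    rw [Finset.HasAntidiagonal.mem_antidiagonal] at hpq
    rw [Finset.mem_product, Finset.HasAntidiagonal.mem_antidiagonal, Finset.HasAntidiagonal.mem_antidiagonal]
    constructor
    · have := congrArg (fun u : Fin 2 →₀ ℕ => u 0) hpq
      simpa [apply_idx0] using this
    · have := congrArg (fun u : Fin 2 →₀ ℕ => u 1) hpq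
      simpa [apply_idx1] using this
  · intro ab hab
    rw [Finset.mem_product, Finset.HasAntidiagonal.mem_antidiagonal, Finset.HasAntidiagonal.mem_antidiagonal] at hab
    rw [Finset.HasAntidiagonal.mem_antidiagonal]
    obtain ⟨h1, h2⟩ := hab
    ext a
    fin_cases a <;> simp [Finsupp.single_apply] <;> omega
  · intro pq hpq
    simp only
    rw [Prod.mk.injEq]
    exact ⟨fin2_decomp pq.1, fin2_decomp pq.2⟩
  · intro ab hab
    simp only [apply_idx0, apply_idx1]
  · intro pq hpq
    simp only
    rw [fin2_decomp, fin2_decomp]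

lemma coeff_X0_mul (φ : MvPowerSeries (Fin 2) ℤ) (n m : ℕ) :
    coeff (s0 n + s1 m) (X 0 * φ)
      = if 1 ≤ n then coeff (s0 (n - 1) + s1 m) φ else 0 := by
  rw [X_def, coeff_monomial_mul]
  have hidx : (s0 n + s1 m) - Finsupp.single 0 1 = s0 (n - 1) + s1 m := by
    ext a
    rw [Finsupp.tsub_apply]
    fin_cases a <;> simp [Finsupp.single_apply]
  by_cases h : 1 ≤ n
  · rw [if_pos (show Finsupp.single 0 1 ≤ s0 n + s1 m from by
      rw [Finsupp.single_le_iff]; simpa [apply_idx0] using h), hidx, one_mul, if_pos h]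
  · rw [if_neg, if_neg h]
    rw [Finsupp.single_le_iff]
    simp only [apply_idx0]
    omega

lemma coeff_X1_mul (φ : MvPowerSeries (Fin 2) ℤ) (n m : ℕ) :
    coeff (s0 n + s1 m) (X 1 * φ)
      = if 1 ≤ m then coeff (s0 n + s1 (m - 1)) φ else 0 := by
  rw [X_def, coeff_monomial_mul]
  have hidx : (s0 n + s1 m) - Finsupp.single 1 1 = s0 n + s1 (m - 1) := by
    ext a
    rw [Finsupp.tsub_apply]
    fin_cases a <;> simp [Finsupp.single_apply]
  by_cases h : 1 ≤ m
  · rw [if_pos (show Finsupp.single 1 1 ≤ s0 n + s1 m from by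
      rw [Finsupp.single_le_iff]; simpa [apply_idx1] using h), hidx, one_mul, if_pos h]
  · rw [if_neg, if_neg h]
    rw [Finsupp.single_le_iff]
    simp only [apply_idx1]
    omega

lemma coeff_one2 (n m : ℕ) :
    coeff (s0 n + s1 m) (1 : MvPowerSeries (Fin 2) ℤ)
      = if n = 0 ∧ m = 0 then 1 else 0 := by
  classical
  rw [coeff_one]
  by_cases h : n = 0 ∧ m = 0
  · rw [if_pos ((idx_eq_zero_iff n m).2 h), if_pos h]
  · rw [if_neg (fun hh => h ((idx_eq_zero_iff n m).1 hh)), if_neg h]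

noncomputable def A (r d : ℕ) : MvPowerSeries (Fin 2) ℤ :=
  fun u => (g r d (u 0) (u 1) : ℤ)

lemma coeff_A (r d n m : ℕ) : coeff (s0 n + s1 m) (A r d) = (g r d n m : ℤ) := by
  rw [coeff_apply]
  show (g r d ((s0 n + s1 m) 0) ((s0 n + s1 m) 1) : ℤ) = _
  rw [apply_idx0, apply_idx1]

lemma SAr (r : ℕ) : A r r = 1 + X 0 * A r 0 := by
  apply MvPowerSeries.ext
  intro u
  rw [← fin2_decomp u]
  generalize u 0 = n
  generalize u 1 = m
  rw [map_add, coeff_A, coeff_one2, coeff_X0_mul, coeff_A]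
  rcases Nat.eq_zero_or_pos n with rfl | hn
  · rw [g_zero, if_neg (show ¬ (1 : ℕ) ≤ 0 by omega), add_zero]
    split_ifs <;> simp_all
  · rw [g_r r n m hn, if_neg (show ¬ (n = 0 ∧ m = 0) by omega),
      if_pos (show 1 ≤ n by omega), zero_add]

lemma SAd (r d : ℕ) (hd : d < r) :
    A r d = A r (d + 1) + X 0 * (X 1 * (A r (d + 1) * A r 0)) := by
  apply MvPowerSeries.ext
  intro u
  rw [← fin2_decomp u]
  generalize u 0 = n
  generalize u 1 = m
  rw [map_add, coeff_A, coeff_A, coeff_X0_mul]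
  rcases Nat.eq_zero_or_pos n with rfl | hn
  · rw [if_neg (show ¬ (1 : ℕ) ≤ 0 by omega), g_zero, g_zero, add_zero]
  · rw [if_pos (show 1 ≤ n by omega), coeff_X1_mul]
    by_cases hm : 1 ≤ m
    · rw [if_pos hm, coeff_mul2, g_rec r d n m hd hn, if_pos hm]
      push_cast
      congr 1
      conv_rhs => rw [Finset.Nat.sum_antidiagonal_eq_sum_range_succ_mk]
      rw [show (n - 1).succ = n by omega]
      apply Finset.sum_congr rfl
      intro j _
      apply Finset.sum_congr rfl
      intro q _
      rw [coeff_A, coeff_A]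
    · rw [if_neg hm, g_rec r d n m hd hn, if_neg hm]
      push_cast
      ring

lemma Apow (r : ℕ) : ∀ k, k ≤ r → A r (r - k) = A r r * (1 + X 0 * X 1 * A r 0) ^ k := by
  intro k
  induction k with
  | zero => intro _; simp
  | succ k ih =>
    intro hk
    have hd : r - (k + 1) < r := by omega
    rw [SAd r (r - (k + 1)) hd, show r - (k + 1) + 1 = r - k by omega, ih (by omega), pow_succ]
    ring


end NCaux

open NCaux in
theorem stmt0 (r : ℕ) (hr : 1 ≤ r) (B : MvPowerSeries (Fin 2) ℤ)
    (hB : ∀ n m : ℕ,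
      MvPowerSeries.coeff (Finsupp.single 0 n + Finsupp.single 1 m) B
        = (ncCount (wordRA r n) m : ℤ)) :
    B = (1 + MvPowerSeries.X 0 * B) * (1 + MvPowerSeries.X 0 * MvPowerSeries.X 1 * B) ^ r := by
  have hA0 : A r 0 = B := by
    apply MvPowerSeries.ext
    intro u
    rw [← fin2_decomp u]
    generalize u 0 = n
    generalize u 1 = m
    rw [coeff_A, hB n m]
    congr 1
    rw [transfer (wordRA r n) (fun i => W r (i + 0)) (fun i => rfl) m]
    rfl
  have key := Apow r r (le_refl r)
  rw [Nat.sub_self, SAr, hA0] at key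
  exact key
end

section
/- Fix an integer r ≥ 1. For all integers n ≥ 0 and 0 ≤ j ≤ n, the number of noncrossing contractions with exactly j edges of the word (a^r a†)^n satisfies (n+1) · #{noncrossing contractions of (a^r a†)^n with j edges} = C(n+1, j+1) · C(rn+r, j), where C denotes the binomial coefficient. -/
open Finset



section Cycle

variable {m : ℕ} (f : ℕ → ℤ)

private def F (f : ℕ → ℤ) (p : ℕ) : ℤ := ∑ i ∈ range p, f i

lemma F_add (c k : ℕ) : F f (c + k) = F f c + ∑ i ∈ range k, f (c + i) := by
  simpa [F] using Finset.sum_range_add f c k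

lemma shift_sum (hper : ∀ i, f (i + m) = f i) :
    ∀ p, ∑ i ∈ range m, f (p + i) = ∑ i ∈ range m, f i := by
  intro p
  induction p with
  | zero => simp
  | succ p ih =>
    have h1 : ∑ i ∈ range (m+1), f (p + i)
        = ∑ i ∈ range m, f (p + (i+1)) + f (p + 0) := Finset.sum_range_succ' _ m
    have h2 : ∑ i ∈ range (m+1), f (p + i)
        = ∑ i ∈ range m, f (p + i) + f (p + m) := Finset.sum_range_succ _ m
    have h3 : f (p + m) = f (p + 0) := by simpa using hper p
    have h4 : ∑ i ∈ range m, f (p + (i+1)) = ∑ i ∈ range m, f (p + i) := by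
      rw [h3] at h2; omega
    calc ∑ i ∈ range m, f (p + 1 + i) = ∑ i ∈ range m, f (p + (i+1)) := by
          apply Finset.sum_congr rfl; intro i _; congr 1; omega
      _ = ∑ i ∈ range m, f i := by rw [h4, ih]

lemma F_period (hper : ∀ i, f (i + m) = f i) (hsum : ∑ i ∈ range m, f i = -1) (p : ℕ) :
    F f (p + m) = F f p - 1 := by
  rw [F_add, shift_sum f hper, hsum]; ring

lemma good_iff (c : ℕ) :
    (∀ k < m, 0 ≤ ∑ i ∈ range k, f (c + i)) ↔ (∀ k < m, F f c ≤ F f (c + k)) := by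
  constructor
  · intro h k hk; have := h k hk; rw [F_add]; linarith
  · intro h k hk; have := h k hk; rw [F_add] at this; linarith

lemma cycle_lemma (hm : 0 < m)
    (hper : ∀ i, f (i + m) = f i)
    (hsum : ∑ i ∈ range m, f i = -1) :
    ∃! c, c < m ∧ ∀ k < m, 0 ≤ ∑ i ∈ range k, f (c + i) := by
  have hFp : ∀ p, F f (p + m) = F f p - 1 := F_period f hper hsum
  -- uniqueness of good cuts
  have Huniq : ∀ c c', c < c' → c' < m →
      ¬ ((∀ k < m, F f c ≤ F f (c + k)) ∧ (∀ k < m, F f c' ≤ F f (c' + k))) := by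
    rintro c c' hlt hm' ⟨hc, hc'⟩
    have h1 : F f c ≤ F f c' := by
      have := hc (c' - c) (by omega)
      rwa [show c + (c' - c) = c' by omega] at this
    have h2 : F f c' ≤ F f (c + m) := by
      have := hc' (c + m - c') (by omega)
      rwa [show c' + (c + m - c') = c + m by omega] at this
    rw [hFp c] at h2; linarith
  -- existence
  set S := (range m).image (F f) with hS
  have hSne : S.Nonempty := (Finset.nonempty_range_iff.2 hm.ne').image _
  set μ := S.min' hSne with hμ
  have hex : ∃ c, c < m ∧ F f c = μ := by
    obtain ⟨c, hc, hfc⟩ := Finset.mem_image.1 (S.min'_mem hSne)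
    exact ⟨c, Finset.mem_range.1 hc, hfc⟩
  classical
  set c := Nat.find hex with hc
  obtain ⟨hcm, hcμ⟩ := Nat.find_spec hex
  have hmin : ∀ s < m, μ ≤ F f s := fun s hs =>
    Finset.min'_le _ _ (Finset.mem_image.2 ⟨s, Finset.mem_range.2 hs, rfl⟩)
  have hstrict : ∀ s < c, μ < F f s := by
    intro s hs
    have h1 := hmin s (lt_trans hs hcm)
    rcases lt_or_eq_of_le h1 with h | h
    · exact h
    · exact absurd ⟨lt_trans hs hcm, h.symm⟩ (Nat.find_min hex hs)
  have hgood : ∀ k < m, F f c ≤ F f (c + k) := by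
    intro k hk
    rcases lt_or_ge (c + k) m with h | h
    · rw [hcμ]; exact hmin _ h
    · have hs : c + k - m < c := by omega
      have : F f (c + k) = F f (c + k - m) - 1 := by
        rw [← hFp]; congr 1; omega
      rw [this, hcμ]
      have := hstrict _ hs
      linarith
  refine ⟨c, ⟨hcm, (good_iff f c).2 hgood⟩, ?_⟩
  rintro c' ⟨hc'm, hgood'⟩
  rw [good_iff] at hgood'
  by_contra hne
  rcases lt_or_gt_of_ne hne with h | h
  · exact Huniq c' c h hcm ⟨hgood', hgood⟩
  · exact Huniq c c' h hc'm ⟨hgood, hgood'⟩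

end Cycle

open Finset

variable {N : ℕ} {w : Fin N → Bool}

section PartA

/-- images under fst/snd have the same card as E -/
lemma card_image_fst {E : Finset (Fin N × Fin N)} (hE : IsContraction w E) :
    (E.image Prod.fst).card = E.card :=
  Finset.card_image_of_injOn (fun e he f hf hef => by
    by_contra hne
    exact (hE.2 e he f hf hne).1 hef)

lemma card_image_snd {E : Finset (Fin N × Fin N)} (hE : IsContraction w E) :
    (E.image Prod.snd).card = E.card :=
  Finset.card_image_of_injOn (fun e he f hf hef => by
    by_contra hne
    exact (hE.2 e he f hf hne).2.2.2 hef)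

lemma contraction_subset {E E' : Finset (Fin N × Fin N)} (h : E' ⊆ E)
    (hE : IsContraction w E) : IsContraction w E' :=
  ⟨fun e he => hE.1 e (h he), fun e he f hf hne => hE.2 e (h he) f (h hf) hne⟩

lemma noncrossing_subset {E E' : Finset (Fin N × Fin N)} (h : E' ⊆ E)
    (hE : IsNoncrossing E) : IsNoncrossing E' :=
  fun e he f hf => hE e (h he) f (h hf)

lemma image_fst_erase {E : Finset (Fin N × Fin N)} (hE : IsContraction w E)
    {e : Fin N × Fin N} (he : e ∈ E) :
    (E.erase e).image Prod.fst = (E.image Prod.fst).erase e.1 := by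
  ext x
  simp only [Finset.mem_image, Finset.mem_erase]
  constructor
  · rintro ⟨g, ⟨hgne, hg⟩, rfl⟩
    exact ⟨(hE.2 g hg e he hgne).1, g, hg, rfl⟩
  · rintro ⟨hne, g, hg, rfl⟩
    exact ⟨g, ⟨fun h => hne (by rw [h]), hg⟩, rfl⟩

lemma image_snd_erase {E : Finset (Fin N × Fin N)} (hE : IsContraction w E)
    {e : Fin N × Fin N} (he : e ∈ E) :
    (E.erase e).image Prod.snd = (E.image Prod.snd).erase e.2 := by
  ext x
  simp only [Finset.mem_image, Finset.mem_erase]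
  constructor
  · rintro ⟨g, ⟨hgne, hg⟩, rfl⟩
    exact ⟨(hE.2 g hg e he hgne).2.2.2, g, hg, rfl⟩
  · rintro ⟨hne, g, hg, rfl⟩
    exact ⟨g, ⟨fun h => hne (by rw [h]), hg⟩, rfl⟩

/-- helper for uniqueness: the partner of the minimal black is the largest available white -/
lemma partner_max {E : Finset (Fin N × Fin N)} (hE : IsContraction w E)
    (hnc : IsNoncrossing E) {b : Fin N}
    (hmin : ∀ y ∈ E.image Prod.snd, b ≤ y)
    {e : Fin N × Fin N} (he : e ∈ E) (heb : e.2 = b)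
    {u' : Fin N} (hu' : u' ∈ E.image Prod.fst) (hub : u' < b) : u' ≤ e.1 := by
  by_contra hlt
  push_neg at hlt
  obtain ⟨g, hg, hgu⟩ := Finset.mem_image.1 hu'
  have hgne : g ≠ e := fun h => by rw [h] at hgu; exact absurd hgu.symm (ne_of_gt hlt)
  have hble : b ≤ g.2 := hmin g.2 (Finset.mem_image.2 ⟨g, hg, rfl⟩)
  have hbne : g.2 ≠ b := by
    have := (hE.2 g hg e he hgne).2.2.2
    rw [heb] at this; exact this
  have hblt : b < g.2 := lt_of_le_of_ne hble (Ne.symm hbne)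
  exact hnc e he g hg (Or.inl ⟨by rw [hgu]; exact hlt, by rw [hgu, heb]; exact hub,
    by rw [heb]; exact hblt⟩)

lemma nc_unique : ∀ (k : ℕ) (E E' : Finset (Fin N × Fin N)), E.card = k →
    IsContraction w E → IsContraction w E' → IsNoncrossing E → IsNoncrossing E' →
    E.image Prod.fst = E'.image Prod.fst → E.image Prod.snd = E'.image Prod.snd →
    E = E' := by
  intro k
  induction k with
  | zero =>
    intro E E' hcard hE hE' _ _ _ hsnd
    have hE0 : E = ∅ := Finset.card_eq_zero.1 hcard
    subst hE0
    have : (E'.image Prod.snd).card = 0 := by rw [← hsnd]; simp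
    rw [card_image_snd hE'] at this
    exact (Finset.card_eq_zero.1 this).symm
  | succ k ih =>
    intro E E' hcard hE hE' hnc hnc' hfst hsnd
    have hne : (E.image Prod.snd).Nonempty := by
      rw [← Finset.card_pos, card_image_snd hE, hcard]; omega
    set b := (E.image Prod.snd).min' hne with hb
    have hbmem : b ∈ E.image Prod.snd := Finset.min'_mem _ _
    have hbmem' : b ∈ E'.image Prod.snd := by rw [← hsnd]; exact hbmem
    obtain ⟨e, he, heb⟩ := Finset.mem_image.1 hbmem
    obtain ⟨e', he', heb'⟩ := Finset.mem_image.1 hbmem'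
    have hminE : ∀ y ∈ E.image Prod.snd, b ≤ y := fun y hy => Finset.min'_le _ _ hy
    have hminE' : ∀ y ∈ E'.image Prod.snd, b ≤ y := by rw [← hsnd]; exact hminE
    -- partners agree
    have hu1 : e'.1 ≤ e.1 := by
      apply partner_max hE hnc hminE he heb
      · rw [hfst]; exact Finset.mem_image.2 ⟨e', he', rfl⟩
      · rw [← heb']; exact (hE'.1 e' he').1
    have hu2 : e.1 ≤ e'.1 := by
      apply partner_max hE' hnc' hminE' he' heb'
      · rw [← hfst]; exact Finset.mem_image.2 ⟨e, he, rfl⟩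
      · rw [← heb]; exact (hE.1 e he).1
    have hee : e = e' := Prod.ext (le_antisymm hu2 hu1) (by rw [heb, heb'])
    subst hee
    have hrec : E.erase e = E'.erase e := by
      apply ih _ _ (by rw [Finset.card_erase_of_mem he, hcard]; omega)
        (contraction_subset (Finset.erase_subset _ _) hE)
        (contraction_subset (Finset.erase_subset _ _) hE')
        (noncrossing_subset (Finset.erase_subset _ _) hnc)
        (noncrossing_subset (Finset.erase_subset _ _) hnc')
      · rw [image_fst_erase hE he, image_fst_erase hE' he', hfst]
      · rw [image_snd_erase hE he, image_snd_erase hE' he', hsnd]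
    calc E = insert e (E.erase e) := (Finset.insert_erase he).symm
      _ = insert e (E'.erase e) := by rw [hrec]
      _ = E' := Finset.insert_erase he'

end PartA

section PartA2

open Classical in
/-- dominance is necessary -/
lemma nc_dom {E : Finset (Fin N × Fin N)} (hE : IsContraction w E) (p : ℕ) :
    ((E.image Prod.snd).filter (fun x => x.val < p)).card
      ≤ ((E.image Prod.fst).filter (fun x => x.val < p)).card := by
  classical
  set f : Fin N → Fin N := fun b => if h : ∃ e, e ∈ E ∧ e.2 = b then h.choose.1 else b with hf
  apply Finset.card_le_card_of_injOn f
  · intro b hb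
    rw [Finset.mem_coe, Finset.mem_filter] at hb
    obtain ⟨hbi, hbp⟩ := hb
    have h : ∃ e, e ∈ E ∧ e.2 = b := by
      obtain ⟨e, he, heb⟩ := Finset.mem_image.1 hbi; exact ⟨e, he, heb⟩
    have hspec := h.choose_spec
    have hfb : f b = h.choose.1 := by rw [hf]; simp only [dif_pos h]
    rw [Finset.mem_coe, Finset.mem_filter, hfb]
    constructor
    · exact Finset.mem_image.2 ⟨h.choose, hspec.1, rfl⟩
    · have hlt : h.choose.1 < h.choose.2 := (hE.1 _ hspec.1).1
      rw [hspec.2] at hlt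
      exact lt_trans hlt hbp
  · intro b hb b' hb' hff
    rw [Finset.coe_filter, Set.mem_setOf_eq] at hb hb'
    have h : ∃ e, e ∈ E ∧ e.2 = b := by
      obtain ⟨e, he, heb⟩ := Finset.mem_image.1 hb.1; exact ⟨e, he, heb⟩
    have h' : ∃ e, e ∈ E ∧ e.2 = b' := by
      obtain ⟨e, he, heb⟩ := Finset.mem_image.1 hb'.1; exact ⟨e, he, heb⟩
    have hfb : f b = h.choose.1 := by rw [hf]; simp only [dif_pos h]
    have hfb' : f b' = h'.choose.1 := by rw [hf]; simp only [dif_pos h']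
    rw [hfb, hfb'] at hff
    have hee : h.choose = h'.choose := by
      by_contra hne
      exact (hE.2 _ h.choose_spec.1 _ h'.choose_spec.1 hne).1 hff
    rw [← h.choose_spec.2, ← h'.choose_spec.2, hee]

lemma nc_exists : ∀ (k : ℕ) (W B : Finset (Fin N)), W.card = k → B.card = k →
    (∀ u ∈ W, w u = false) → (∀ b ∈ B, w b = true) →
    (∀ p : ℕ, (B.filter (fun x => x.val < p)).card ≤ (W.filter (fun x => x.val < p)).card) →
    ∃ E, IsContraction w E ∧ IsNoncrossing E ∧ E.image Prod.fst = W ∧ E.image Prod.snd = B := by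
  intro k
  induction k with
  | zero =>
    intro W B hW hB _ _ _
    refine ⟨∅, ⟨by simp, by simp⟩, by intro e he; simp at he, ?_, ?_⟩ <;>
      simp [Finset.card_eq_zero.1 hW, Finset.card_eq_zero.1 hB]
  | succ k ih =>
    intro W B hW hB hWcol hBcol hdom
    have hBne : B.Nonempty := by rw [← Finset.card_pos, hB]; omega
    set b := B.min' hBne with hbdef
    have hb : b ∈ B := B.min'_mem hBne
    have hbmin : ∀ y ∈ B, b ≤ y := fun y hy => B.min'_le y hy
    -- the set of whites below b is nonempty
    have hWFne : (W.filter (fun x => x < b)).Nonempty := by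
      have h1 := hdom (b.val + 1)
      have h2 : b ∈ B.filter (fun x => x.val < b.val + 1) := by
        rw [Finset.mem_filter]; exact ⟨hb, by omega⟩
      have h3 : 0 < (W.filter (fun x => x.val < b.val + 1)).card := by
        calc 0 < (B.filter (fun x => x.val < b.val + 1)).card := Finset.card_pos.2 ⟨b, h2⟩
          _ ≤ _ := h1
      obtain ⟨u0, hu0⟩ := Finset.card_pos.1 h3
      rw [Finset.mem_filter] at hu0
      refine ⟨u0, Finset.mem_filter.2 ⟨hu0.1, ?_⟩⟩
      have hne : u0 ≠ b := fun h => by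
        have := hWcol u0 hu0.1; rw [h, hBcol b hb] at this; exact Bool.noConfusion this
      have : u0.val ≠ b.val := fun h => hne (Fin.ext h)
      exact Fin.lt_def.2 (by omega)
    set u := (W.filter (fun x => x < b)).max' hWFne with hudef
    have huf : u ∈ W.filter (fun x => x < b) := Finset.max'_mem _ _
    have hu : u ∈ W := (Finset.mem_filter.1 huf).1
    have hub : u < b := (Finset.mem_filter.1 huf).2
    have humax : ∀ x ∈ W, x < b → x ≤ u := by
      intro x hx hxb
      exact Finset.le_max' (W.filter (fun y => y < b)) x (Finset.mem_filter.2 ⟨hx, hxb⟩)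
    -- dominance for the reduced pair
    have hdom' : ∀ p : ℕ, ((B.erase b).filter (fun x => x.val < p)).card
        ≤ ((W.erase u).filter (fun x => x.val < p)).card := by
      intro p
      rw [Finset.filter_erase, Finset.filter_erase]
      rcases le_or_gt p b.val with hp | hp
      · have hbe : b ∉ B.filter (fun x => x.val < p) := fun h =>
          absurd (Finset.mem_filter.1 h).2 (by omega)
        rw [Finset.erase_eq_of_notMem hbe]
        rcases le_or_gt p u.val with hpu | hpu
        · have hue : u ∉ W.filter (fun x => x.val < p) := fun h =>
            absurd (Finset.mem_filter.1 h).2 (by omega)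
          rw [Finset.erase_eq_of_notMem hue]
          exact hdom p
        · have hBempty : B.filter (fun x => x.val < p) = ∅ := by
            rw [Finset.filter_eq_empty_iff]
            intro x hx
            have := hbmin x hx
            have : b.val ≤ x.val := this
            omega
          rw [hBempty]; simp
      · have hbe : b ∈ B.filter (fun x => x.val < p) := Finset.mem_filter.2 ⟨hb, by omega⟩
        have hue : u ∈ W.filter (fun x => x.val < p) := Finset.mem_filter.2 ⟨hu, by
          have : u.val < b.val := hub
          omega⟩
        rw [Finset.card_erase_of_mem hbe, Finset.card_erase_of_mem hue]
        exact Nat.sub_le_sub_right (hdom p) 1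
    obtain ⟨E', hE', hnc', hfst', hsnd'⟩ := ih (W.erase u) (B.erase b)
      (by rw [Finset.card_erase_of_mem hu, hW]; omega)
      (by rw [Finset.card_erase_of_mem hb, hB]; omega)
      (fun x hx => hWcol x (Finset.mem_of_mem_erase hx))
      (fun x hx => hBcol x (Finset.mem_of_mem_erase hx)) hdom'
    -- facts about edges of E'
    have hE'fst : ∀ f ∈ E', f.1 ∈ W ∧ f.1 ≠ u := by
      intro f hf
      have : f.1 ∈ W.erase u := by rw [← hfst']; exact Finset.mem_image.2 ⟨f, hf, rfl⟩
      exact ⟨Finset.mem_of_mem_erase this, Finset.ne_of_mem_erase this⟩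
    have hE'snd : ∀ f ∈ E', f.2 ∈ B ∧ b < f.2 := by
      intro f hf
      have h1 : f.2 ∈ B.erase b := by rw [← hsnd']; exact Finset.mem_image.2 ⟨f, hf, rfl⟩
      exact ⟨Finset.mem_of_mem_erase h1,
        lt_of_le_of_ne (hbmin _ (Finset.mem_of_mem_erase h1)) (Finset.ne_of_mem_erase h1).symm⟩
    have hE'fstu : ∀ f ∈ E', f.1 < b → f.1 < u := by
      intro f hf hfb
      exact lt_of_le_of_ne (humax f.1 (hE'fst f hf).1 hfb) (hE'fst f hf).2
    have hdist : ∀ f ∈ E', u ≠ f.1 ∧ u ≠ f.2 ∧ b ≠ f.1 ∧ b ≠ f.2 := by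
      intro f hf
      refine ⟨fun h => (hE'fst f hf).2 h.symm, fun h => ?_, fun h => ?_,
        fun h => (ne_of_lt (hE'snd f hf).2) h⟩
      · have h1 := hWcol u hu
        have h2 := (hE'.1 f hf).2.2
        rw [← h] at h2; rw [h1] at h2; exact Bool.noConfusion h2
      · have h1 := hBcol b hb
        have h2 := (hE'.1 f hf).2.1
        rw [← h] at h2; rw [h1] at h2; exact Bool.noConfusion h2
    have hnotmem : (u, b) ∉ E' := fun h => (hdist _ h).1 rfl
    refine ⟨insert (u, b) E', ⟨?_, ?_⟩, ?_, ?_, ?_⟩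
    · intro e he
      rcases Finset.mem_insert.1 he with rfl | he'
      · exact ⟨hub, hWcol u hu, hBcol b hb⟩
      · exact hE'.1 e he'
    · intro e he f hf hef
      rcases Finset.mem_insert.1 he with rfl | he' <;>
        rcases Finset.mem_insert.1 hf with rfl | hf'
      · exact absurd rfl hef
      · exact ⟨(hdist f hf').1, (hdist f hf').2.1, (hdist f hf').2.2.1, (hdist f hf').2.2.2⟩
      · exact ⟨((hdist e he').1).symm, ((hdist e he').2.2.1).symm,
          ((hdist e he').2.1).symm, ((hdist e he').2.2.2).symm⟩
      · exact hE'.2 e he' f hf' hef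
    · intro e he f hf
      rcases Finset.mem_insert.1 he with rfl | he' <;>
        rcases Finset.mem_insert.1 hf with rfl | hf'
      · rintro (⟨h1, _, _⟩ | ⟨h1, _, _⟩) <;> exact lt_irrefl _ h1
      · rintro (⟨h1, h2, h3⟩ | ⟨h1, h2, h3⟩)
        · exact absurd (hE'fstu f hf' h2) (not_lt.2 (le_of_lt h1))
        · exact absurd h3 (not_lt.2 (le_of_lt (hE'snd f hf').2))
      · rintro (⟨h1, h2, h3⟩ | ⟨h1, h2, h3⟩)
        · exact absurd h3 (not_lt.2 (le_of_lt (hE'snd e he').2))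
        · exact absurd (hE'fstu e he' h2) (not_lt.2 (le_of_lt h1))
      · exact hnc' e he' f hf'
    · rw [Finset.image_insert, hfst']
      exact Finset.insert_erase hu
    · rw [Finset.image_insert, hsnd']
      exact Finset.insert_erase hb

end PartA2

def IsDomPair (w : Fin N → Bool) (j : ℕ) (P : Finset (Fin N) × Finset (Fin N)) : Prop :=
  (∀ u ∈ P.1, w u = false) ∧ (∀ b ∈ P.2, w b = true) ∧ P.1.card = j ∧ P.2.card = j ∧
  ∀ p : ℕ, (P.2.filter (fun x => x.val < p)).card ≤ (P.1.filter (fun x => x.val < p)).card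

lemma ncCount_eq_domPairs (w : Fin N → Bool) (j : ℕ) :
    ncCount w j = Nat.card {P : Finset (Fin N) × Finset (Fin N) // IsDomPair w j P} := by
  apply Nat.card_congr
  refine Equiv.ofBijective (fun E => ⟨(E.1.image Prod.fst, E.1.image Prod.snd), ?_⟩) ⟨?_, ?_⟩
  · obtain ⟨E, hE, hnc, hcard⟩ := E
    refine ⟨?_, ?_, ?_, ?_, ?_⟩
    · intro u hu
      obtain ⟨e, he, rfl⟩ := Finset.mem_image.1 hu
      exact (hE.1 e he).2.1
    · intro b hb
      obtain ⟨e, he, rfl⟩ := Finset.mem_image.1 hb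
      exact (hE.1 e he).2.2
    · rw [card_image_fst hE, hcard]
    · rw [card_image_snd hE, hcard]
    · exact nc_dom hE
  · rintro ⟨E, hE, hnc, hcard⟩ ⟨E', hE', hnc', hcard'⟩ h
    simp only [Subtype.mk.injEq, Prod.mk.injEq] at h
    exact Subtype.ext (nc_unique E.card E E' rfl hE hE' hnc hnc' h.1 h.2)
  · rintro ⟨⟨W, B⟩, hWcol, hBcol, hWc, hBc, hdom⟩
    obtain ⟨E, hE, hnc, hfst, hsnd⟩ := nc_exists j W B hWc hBc hWcol hBcol hdom
    have hcard : E.card = j := by rw [← card_image_fst hE, hfst, hWc]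
    exact ⟨⟨E, hE, hnc, hcard⟩, by simp [hfst, hsnd]⟩



section Steps

variable {M : ℕ}

def stepF (P : Finset (Fin M) × Finset (Fin M)) : Fin M → ℤ :=
  fun i => if i ∈ P.1 then 1 else if i ∈ P.2 then -1 else 0

def fstep (P : Finset (Fin M) × Finset (Fin M)) : ℕ → ℤ :=
  fun i => if h : i % M < M then stepF P ⟨i % M, h⟩ else 0

lemma fstep_period (P : Finset (Fin M) × Finset (Fin M)) (i : ℕ) :
    fstep P (i + M) = fstep P i := by
  unfold fstep
  congr 1 <;> rw [Nat.add_mod_right]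

lemma fstep_ge (P : Finset (Fin M) × Finset (Fin M)) (i : ℕ) : -1 ≤ fstep P i := by
  unfold fstep stepF
  split <;> try norm_num
  split <;> try norm_num
  split <;> norm_num

lemma fstep_le (P : Finset (Fin M) × Finset (Fin M)) (i : ℕ) : fstep P i ≤ 1 := by
  unfold fstep stepF
  split <;> try norm_num
  split <;> try norm_num
  split <;> norm_num

lemma fstep_lt (P : Finset (Fin M) × Finset (Fin M)) {i : ℕ} (hi : i < M) :
    fstep P i = stepF P ⟨i, hi⟩ := by
  unfold fstep
  simp only [Nat.mod_eq_of_lt hi]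
  rw [dif_pos hi]

lemma filter_card_succ (S : Finset (Fin M)) (k : ℕ) (hk : k < M) :
    (S.filter (fun x => x.val < k + 1)).card
      = (S.filter (fun x => x.val < k)).card + (if (⟨k, hk⟩ : Fin M) ∈ S then 1 else 0) := by
  by_cases h : (⟨k, hk⟩ : Fin M) ∈ S
  · rw [if_pos h]
    have : S.filter (fun x => x.val < k + 1) = insert ⟨k, hk⟩ (S.filter (fun x => x.val < k)) := by
      ext x
      simp only [Finset.mem_filter, Finset.mem_insert]
      constructor
      · rintro ⟨hx, hxk⟩
        rcases Nat.lt_or_ge x.val k with h' | h'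
        · exact Or.inr ⟨hx, h'⟩
        · exact Or.inl (Fin.ext (show x.val = k by omega))
      · rintro (rfl | ⟨hx, hxk⟩)
        · exact ⟨h, show k < k + 1 by omega⟩
        · exact ⟨hx, by omega⟩
    rw [this, Finset.card_insert_of_notMem (fun hc => by
      have := (Finset.mem_filter.1 hc).2; simp at this)]
  · rw [if_neg h]
    congr 1
    ext x
    simp only [Finset.mem_filter]
    constructor
    · rintro ⟨hx, hxk⟩
      refine ⟨hx, ?_⟩
      rcases Nat.lt_or_ge x.val k with h' | h'
      · exact h'
      · exact absurd (show x = ⟨k, hk⟩ from Fin.ext (show x.val = k by omega)) (fun hh => h (hh ▸ hx))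
    · rintro ⟨hx, hxk⟩
      exact ⟨hx, by omega⟩

lemma sum_fstep_eq (P : Finset (Fin M) × Finset (Fin M)) (hd : ∀ x ∈ P.1, x ∉ P.2) :
    ∀ k ≤ M, ∑ i ∈ range k, fstep P i
      = ((P.1.filter (fun x => x.val < k)).card : ℤ)
        - ((P.2.filter (fun x => x.val < k)).card : ℤ) := by
  intro k
  induction k with
  | zero => intro _; simp
  | succ k ih =>
    intro hk
    have hkM : k < M := by omega
    rw [Finset.sum_range_succ, ih (by omega), fstep_lt P hkM,
      filter_card_succ P.1 k hkM, filter_card_succ P.2 k hkM]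
    unfold stepF
    by_cases h1 : (⟨k, hkM⟩ : Fin M) ∈ P.1
    · rw [if_pos h1, if_pos h1, if_neg (hd _ h1)]
      push_cast; ring
    · rw [if_neg h1, if_neg h1]
      by_cases h2 : (⟨k, hkM⟩ : Fin M) ∈ P.2
      · rw [if_pos h2, if_pos h2]; push_cast; ring
      · rw [if_neg h2, if_neg h2]; push_cast; ring

lemma sum_fstep_full (P : Finset (Fin M) × Finset (Fin M)) (hd : ∀ x ∈ P.1, x ∉ P.2) :
    ∑ i ∈ range M, fstep P i = (P.1.card : ℤ) - (P.2.card : ℤ) := by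
  rw [sum_fstep_eq P hd M le_rfl,
    Finset.filter_true_of_mem (fun x _ => x.isLt),
    Finset.filter_true_of_mem (fun x _ => x.isLt)]

end Steps

lemma blacks_card (r k : ℕ) :
    (Finset.univ.filter (fun i : Fin ((r+1)*k) => i.val % (r+1) = r)).card = k := by
  have hbound : ∀ a ∈ Finset.range k, (r+1)*a + r < (r+1)*k := by
    intro a ha
    have h1 : a < k := Finset.mem_range.1 ha
    calc (r+1)*a + r < (r+1)*a + (r+1) := by omega
      _ = (r+1)*(a+1) := by ring
      _ ≤ (r+1)*k := Nat.mul_le_mul_left _ (by omega)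
  have h : (Finset.univ.filter (fun i : Fin ((r+1)*k) => i.val % (r+1) = r)).card
      = (Finset.range k).card := by
    refine Finset.card_bij' (fun i _ => i.val / (r+1))
      (fun a ha => ⟨(r+1)*a + r, hbound a ha⟩) ?hi ?hj ?li ?ri
    case hi =>
      intro i hi
      rw [Finset.mem_filter] at hi
      apply Finset.mem_range.2
      have h1 : i.val < (r+1)*k := i.isLt
      have h2 := Nat.div_add_mod i.val (r+1)
      rcases Nat.lt_or_ge (i.val / (r+1)) k with h | h
      · exact h
      · exfalso
        have : (r+1)*k ≤ (r+1)*(i.val/(r+1)) := Nat.mul_le_mul_left _ h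
        omega
    case hj =>
      intro a ha
      rw [Finset.mem_filter]
      exact ⟨Finset.mem_univ _, by
        show ((r+1)*a + r) % (r+1) = r
        rw [Nat.mul_add_mod]
        exact Nat.mod_eq_of_lt (by omega)⟩
    case li =>
      intro i hi
      rw [Finset.mem_filter] at hi
      apply Fin.ext
      show (r+1) * (i.val / (r+1)) + r = i.val
      have := Nat.div_add_mod i.val (r+1)
      omega
    case ri =>
      intro a ha
      show ((r+1)*a + r) / (r+1) = a
      rw [Nat.mul_add_div (by omega), Nat.div_eq_of_lt (by omega)]
      omega
  rw [h, Finset.card_range]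

section Shift

variable (r n : ℕ)

def sigmaSh (t : ℕ) : Fin ((r+1)*(n+1)) → Fin ((r+1)*(n+1)) :=
  fun i => ⟨(i.val + (r+1)*t) % ((r+1)*(n+1)), Nat.mod_lt _ (by positivity)⟩

lemma sigma_inj (t : ℕ) : Function.Injective (sigmaSh r n t) := by
  intro a b hab
  have h : (a.val + (r+1)*t) % ((r+1)*(n+1)) = (b.val + (r+1)*t) % ((r+1)*(n+1)) :=
    congrArg Fin.val hab
  have h2 : a.val ≡ b.val [MOD (r+1)*(n+1)] := Nat.ModEq.add_right_cancel' _ h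
  apply Fin.ext
  have h3 : a.val % ((r+1)*(n+1)) = b.val % ((r+1)*(n+1)) := h2
  rwa [Nat.mod_eq_of_lt a.isLt, Nat.mod_eq_of_lt b.isLt] at h3

lemma sigma_sigma (t : ℕ) (ht : t ≤ n+1) (x : Fin ((r+1)*(n+1))) :
    sigmaSh r n t (sigmaSh r n (n+1-t) x) = x := by
  apply Fin.ext
  show ((x.val + (r+1)*(n+1-t)) % ((r+1)*(n+1)) + (r+1)*t) % ((r+1)*(n+1)) = x.val
  rw [Nat.mod_add_mod]
  have h : x.val + (r+1)*(n+1-t) + (r+1)*t = x.val + (r+1)*(n+1) := by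
    rw [add_assoc, ← Nat.mul_add]
    congr 2
    omega
  rw [h, Nat.add_mod_right]
  exact Nat.mod_eq_of_lt x.isLt

lemma sigma_color (t : ℕ) (i : Fin ((r+1)*(n+1))) :
    wordRA r (n+1) (sigmaSh r n t i) = wordRA r (n+1) i := by
  unfold wordRA sigmaSh
  have h : (i.val + (r+1)*t) % ((r+1)*(n+1)) % (r+1) = i.val % (r+1) := by
    rw [Nat.mod_mod_of_dvd _ (dvd_mul_right _ _), Nat.add_mul_mod_self_left]
  simp only [Fin.val_mk] at h ⊢
  rw [h]

lemma mem_image_inj {α β : Type*} [DecidableEq β] {f : α → β} (hf : Function.Injective f)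
    {S : Finset α} {x : α} : f x ∈ S.image f ↔ x ∈ S := by
  constructor
  · intro h
    obtain ⟨y, hy, he⟩ := Finset.mem_image.1 h
    rwa [hf he] at hy
  · exact Finset.mem_image_of_mem f

lemma fstep_shift (P : Finset (Fin ((r+1)*(n+1))) × Finset (Fin ((r+1)*(n+1)))) (t i : ℕ) :
    fstep (P.1.image (sigmaSh r n t), P.2.image (sigmaSh r n t)) ((r+1)*t + i) = fstep P i := by
  have hM : 0 < (r+1)*(n+1) := by positivity
  have h1 : ((r+1)*t + i) % ((r+1)*(n+1))
      = (sigmaSh r n t ⟨i % ((r+1)*(n+1)), Nat.mod_lt _ hM⟩).val := by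
    show _ = (i % ((r+1)*(n+1)) + (r+1)*t) % ((r+1)*(n+1))
    rw [Nat.mod_add_mod, Nat.add_comm]
  unfold fstep
  rw [dif_pos (Nat.mod_lt _ hM), dif_pos (Nat.mod_lt _ hM)]
  have h2 : (⟨((r+1)*t + i) % ((r+1)*(n+1)), Nat.mod_lt _ hM⟩ : Fin ((r+1)*(n+1)))
      = sigmaSh r n t ⟨i % ((r+1)*(n+1)), Nat.mod_lt _ hM⟩ := Fin.ext h1
  rw [h2]
  unfold stepF
  simp only [mem_image_inj (sigma_inj r n t)]

end Shift

section Main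

variable (r n j : ℕ)

def iotaEmb : Fin ((r+1)*n) → Fin ((r+1)*(n+1)) :=
  Fin.castLE (Nat.mul_le_mul_left _ (by omega))

lemma iota_inj : Function.Injective (iotaEmb r n) := Fin.castLE_injective _

lemma MN_eq : (r+1)*(n+1) = (r+1)*n + (r+1) := by ring

def Lb : Fin ((r+1)*(n+1)) := ⟨(r+1)*n + r, by have := MN_eq r n; omega⟩

lemma Lb_notmem (S : Finset (Fin ((r+1)*n))) : Lb r n ∉ S.image (iotaEmb r n) := by
  intro h
  obtain ⟨x, _, hx⟩ := Finset.mem_image.1 h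
  have : x.val = (r+1)*n + r := congrArg Fin.val hx
  have := x.isLt
  omega

def padP (P : Finset (Fin ((r+1)*n)) × Finset (Fin ((r+1)*n))) :
    Finset (Fin ((r+1)*(n+1))) × Finset (Fin ((r+1)*(n+1))) :=
  (P.1.image (iotaEmb r n), insert (Lb r n) (P.2.image (iotaEmb r n)))

def PsiF (t : ℕ) (P : Finset (Fin ((r+1)*n)) × Finset (Fin ((r+1)*n))) :
    Finset (Fin ((r+1)*(n+1))) × Finset (Fin ((r+1)*(n+1))) :=
  ((padP r n P).1.image (sigmaSh r n t), (padP r n P).2.image (sigmaSh r n t))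

def IsConfig (Q : Finset (Fin ((r+1)*(n+1))) × Finset (Fin ((r+1)*(n+1)))) : Prop :=
  (∀ u ∈ Q.1, wordRA r (n+1) u = false) ∧ (∀ b ∈ Q.2, wordRA r (n+1) b = true) ∧
  Q.1.card = j ∧ Q.2.card = j + 1

lemma iota_color (x : Fin ((r+1)*n)) : wordRA r (n+1) (iotaEmb r n x) = wordRA r n x := rfl

lemma Lb_color : wordRA r (n+1) (Lb r n) = true := by
  have h : ((r+1)*n + r) % (r+1) = r := by
    rw [Nat.mul_add_mod]
    exact Nat.mod_eq_of_lt (by omega)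
  simp [wordRA, Lb, h]

lemma image_iota_filter (S : Finset (Fin ((r+1)*n))) (k : ℕ) :
    (S.image (iotaEmb r n)).filter (fun x => x.val < k)
      = (S.filter (fun x => x.val < k)).image (iotaEmb r n) := by
  ext y
  simp only [Finset.mem_filter, Finset.mem_image]
  constructor
  · rintro ⟨⟨x, hx, rfl⟩, h⟩
    exact ⟨x, ⟨hx, h⟩, rfl⟩
  · rintro ⟨x, ⟨hx, h⟩, rfl⟩
    exact ⟨⟨x, hx, rfl⟩, h⟩

lemma pad_colors {P} (hP : IsDomPair (wordRA r n) j P) :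
    (∀ u ∈ (padP r n P).1, wordRA r (n+1) u = false) ∧
    (∀ b ∈ (padP r n P).2, wordRA r (n+1) b = true) := by
  constructor
  · intro u hu
    obtain ⟨x, hx, rfl⟩ := Finset.mem_image.1 hu
    rw [iota_color]
    exact hP.1 x hx
  · intro b hb
    rcases Finset.mem_insert.1 hb with rfl | hb'
    · exact Lb_color r n
    · obtain ⟨x, hx, rfl⟩ := Finset.mem_image.1 hb'
      rw [iota_color]
      exact hP.2.1 x hx

lemma pad_disj {P} (hP : IsDomPair (wordRA r n) j P) : ∀ x ∈ (padP r n P).1, x ∉ (padP r n P).2 := by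
  intro x hx hx2
  have h1 := (pad_colors r n j hP).1 x hx
  have h2 := (pad_colors r n j hP).2 x hx2
  rw [h1] at h2
  exact Bool.noConfusion h2

lemma pad_cards {P} (hP : IsDomPair (wordRA r n) j P) :
    (padP r n P).1.card = j ∧ (padP r n P).2.card = j + 1 := by
  constructor
  · rw [show (padP r n P).1 = P.1.image (iotaEmb r n) from rfl,
      Finset.card_image_of_injective _ (iota_inj r n)]
    exact hP.2.2.1
  · rw [show (padP r n P).2 = insert (Lb r n) (P.2.image (iotaEmb r n)) from rfl,
      Finset.card_insert_of_notMem (Lb_notmem r n _),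
      Finset.card_image_of_injective _ (iota_inj r n)]
    rw [hP.2.2.2.1]

lemma pad_good {P} (hP : IsDomPair (wordRA r n) j P) :
    ∀ k < (r+1)*(n+1), 0 ≤ ∑ i ∈ Finset.range k, fstep (padP r n P) i := by
  intro k hk
  rw [sum_fstep_eq _ (pad_disj r n j hP) k (le_of_lt hk)]
  have h2 : (padP r n P).2.filter (fun x => x.val < k)
      = (P.2.filter (fun x => x.val < k)).image (iotaEmb r n) := by
    rw [show (padP r n P).2 = insert (Lb r n) (P.2.image (iotaEmb r n)) from rfl,
      Finset.filter_insert, if_neg (by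
        show ¬ ((Lb r n).val < k)
        have : (Lb r n).val = (r+1)*n + r := rfl
        have := MN_eq r n
        omega), image_iota_filter]
  have h1 : (padP r n P).1.filter (fun x => x.val < k)
      = (P.1.filter (fun x => x.val < k)).image (iotaEmb r n) := image_iota_filter r n _ _
  rw [h1, h2, Finset.card_image_of_injective _ (iota_inj r n),
    Finset.card_image_of_injective _ (iota_inj r n)]
  have := hP.2.2.2.2 k
  omega

lemma psi_good (t : ℕ) {P} (hP : IsDomPair (wordRA r n) j P) :
    ∀ k < (r+1)*(n+1), 0 ≤ ∑ i ∈ Finset.range k, fstep (PsiF r n t P) ((r+1)*t + i) := by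
  intro k hk
  have h : ∀ i, fstep (PsiF r n t P) ((r+1)*t + i) = fstep (padP r n P) i :=
    fun i => fstep_shift r n (padP r n P) t i
  rw [Finset.sum_congr rfl (fun i _ => h i)]
  exact pad_good r n j hP k hk

lemma psi_config (t : ℕ) {P} (hP : IsDomPair (wordRA r n) j P) : IsConfig r n j (PsiF r n t P) := by
  refine ⟨?_, ?_, ?_, ?_⟩
  · intro u hu
    obtain ⟨x, hx, rfl⟩ := Finset.mem_image.1 hu
    rw [sigma_color]
    exact (pad_colors r n j hP).1 x hx
  · intro b hb
    obtain ⟨x, hx, rfl⟩ := Finset.mem_image.1 hb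
    rw [sigma_color]
    exact (pad_colors r n j hP).2 x hx
  · rw [show (PsiF r n t P).1 = (padP r n P).1.image (sigmaSh r n t) from rfl,
      Finset.card_image_of_injective _ (sigma_inj r n t)]
    exact (pad_cards r n j hP).1
  · rw [show (PsiF r n t P).2 = (padP r n P).2.image (sigmaSh r n t) from rfl,
      Finset.card_image_of_injective _ (sigma_inj r n t)]
    exact (pad_cards r n j hP).2

end Main

section Main2

variable (r n j : ℕ)

lemma config_disj {Q} (hQ : IsConfig r n j Q) : ∀ x ∈ Q.1, x ∉ Q.2 := by
  intro x hx hx2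
  have h1 := hQ.1 x hx
  have h2 := hQ.2.1 x hx2
  rw [h1] at h2
  exact Bool.noConfusion h2

lemma config_sum {Q} (hQ : IsConfig r n j Q) :
    ∑ i ∈ Finset.range ((r+1)*(n+1)), fstep Q i = -1 := by
  rw [sum_fstep_full _ (config_disj r n j hQ), hQ.2.2.1, hQ.2.2.2]
  push_cast
  ring

lemma image_cancel {α β : Type*} [DecidableEq β] {f : α → β} (hf : Function.Injective f)
    {S T : Finset α} (h : S.image f = T.image f) : S = T := by
  ext x
  rw [← mem_image_inj hf (S := S) (x := x), h, mem_image_inj hf]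

lemma psi_injective (t t' : Fin (n+1)) {P P'} (hP : IsDomPair (wordRA r n) j P)
    (hP' : IsDomPair (wordRA r n) j P') (h : PsiF r n t.val P = PsiF r n t'.val P') :
    t = t' ∧ P = P' := by
  have hM : 0 < (r+1)*(n+1) := by positivity
  obtain ⟨c, _, hcuniq⟩ := cycle_lemma (fstep (PsiF r n t.val P)) hM
    (fstep_period _) (config_sum r n j (psi_config r n j t.val hP))
  have hlt : ∀ s : Fin (n+1), (r+1)*s.val < (r+1)*(n+1) := by
    intro s
    have h1 : (r+1)*(s.val+1) ≤ (r+1)*(n+1) := Nat.mul_le_mul_left _ (by omega)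
    have h2 : (r+1)*(s.val+1) = (r+1)*s.val + (r+1) := by ring
    omega
  have h1 : (r+1)*t.val = c := hcuniq _ ⟨hlt t, psi_good r n j t.val hP⟩
  have h2 : (r+1)*t'.val = c := hcuniq _ ⟨hlt t', by
    rw [h]; exact psi_good r n j t'.val hP'⟩
  have htt : t = t' := by
    apply Fin.ext
    have := h1.trans h2.symm
    exact Nat.eq_of_mul_eq_mul_left (by omega) this
  subst htt
  refine ⟨rfl, ?_⟩
  have hpad : padP r n P = padP r n P' := by
    have h1' := congrArg Prod.fst h
    have h2' := congrArg Prod.snd h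
    exact Prod.ext (image_cancel (sigma_inj r n t.val) h1')
      (image_cancel (sigma_inj r n t.val) h2')
  have hfst : P.1 = P'.1 := by
    have h1' : P.1.image (iotaEmb r n) = P'.1.image (iotaEmb r n) := congrArg Prod.fst hpad
    exact image_cancel (iota_inj r n) h1' 
  have hsnd : P.2 = P'.2 := by
    have h2' := congrArg Prod.snd hpad
    have e1 : P.2.image (iotaEmb r n)
        = (insert (Lb r n) (P.2.image (iotaEmb r n))).erase (Lb r n) :=
      (Finset.erase_insert (Lb_notmem r n _)).symm
    have e2 : (insert (Lb r n) (P'.2.image (iotaEmb r n))).erase (Lb r n)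
        = P'.2.image (iotaEmb r n) := Finset.erase_insert (Lb_notmem r n _)
    apply image_cancel (iota_inj r n)
    rw [e1, show insert (Lb r n) (P.2.image (iotaEmb r n)) = (padP r n P).2 from rfl, h2']
    exact e2
  exact Prod.ext hfst hsnd

end Main2

section Main3

variable (r n j : ℕ)

lemma fstep_neg_mem {M : ℕ} {Q : Finset (Fin M) × Finset (Fin M)} (i : ℕ) (hi : i < M)
    (h : fstep Q i = -1) : (⟨i, hi⟩ : Fin M) ∈ Q.2 := by
  rw [fstep_lt Q hi] at h
  unfold stepF at h
  by_cases h1 : (⟨i, hi⟩ : Fin M) ∈ Q.1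
  · rw [if_pos h1] at h; norm_num at h
  · rw [if_neg h1] at h
    by_cases h2 : (⟨i, hi⟩ : Fin M) ∈ Q.2
    · exact h2
    · rw [if_neg h2] at h; norm_num at h

lemma config_last {Q} (hQ : IsConfig r n j Q) (c : ℕ)
    (hgood : ∀ k < (r+1)*(n+1), 0 ≤ ∑ i ∈ Finset.range k, fstep Q (c+i)) :
    fstep Q (c + ((r+1)*(n+1)-1)) = -1 ∧
      ∑ i ∈ Finset.range ((r+1)*(n+1)-1), fstep Q (c+i) = 0 := by
  have hM : 0 < (r+1)*(n+1) := by positivity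
  have hsumc : ∑ i ∈ Finset.range ((r+1)*(n+1)), fstep Q (c+i) = -1 := by
    rw [shift_sum (fstep Q) (fstep_period Q) c]
    exact config_sum r n j hQ
  have hM1 : (r+1)*(n+1) - 1 + 1 = (r+1)*(n+1) := by omega
  have h2 : ∑ i ∈ Finset.range ((r+1)*(n+1)), fstep Q (c+i)
      = ∑ i ∈ Finset.range ((r+1)*(n+1)-1), fstep Q (c+i) + fstep Q (c + ((r+1)*(n+1)-1)) := by
    conv_lhs => rw [show Finset.range ((r+1)*(n+1))
      = Finset.range ((r+1)*(n+1)-1+1) from by rw [hM1]]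
    exact Finset.sum_range_succ _ _
  have h1 := hgood ((r+1)*(n+1)-1) (by omega)
  have h3 := fstep_ge Q (c + ((r+1)*(n+1)-1))
  omega

lemma psi_surjective {Q} (hQ : IsConfig r n j Q) :
    ∃ (t : Fin (n+1)) (P : Finset (Fin ((r+1)*n)) × Finset (Fin ((r+1)*n))),
      IsDomPair (wordRA r n) j P ∧ PsiF r n t.val P = Q := by
  classical
  have hM : 0 < (r+1)*(n+1) := by positivity
  have hMN := MN_eq r n
  obtain ⟨c, ⟨hcM, hcgood⟩, _⟩ :=
    cycle_lemma (fstep Q) hM (fstep_period Q) (config_sum r n j hQ)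
  obtain ⟨hclast, hcpre⟩ := config_last r n j hQ c hcgood
  -- the good cut is a block boundary
  have hdvd : (r+1) ∣ c := by
    rcases Nat.eq_zero_or_pos c with rfl | hc
    · exact dvd_zero _
    · have hrw : c + ((r+1)*(n+1) - 1) = (c - 1) + (r+1)*(n+1) := by omega
      rw [hrw, fstep_period] at hclast
      have hcm : c - 1 < (r+1)*(n+1) := by omega
      have hmem := fstep_neg_mem (Q := Q) (c-1) hcm hclast
      have hcol := hQ.2.1 _ hmem
      simp only [wordRA, decide_eq_true_eq] at hcol
      have hd := Nat.div_add_mod (c-1) (r+1)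
      refine ⟨(c-1)/(r+1) + 1, ?_⟩
      have hh : (r+1)*((c-1)/(r+1)+1) = (r+1)*((c-1)/(r+1)) + (r+1) := by ring
      omega
  set t := c / (r+1) with ht
  have hct : (r+1) * t = c := Nat.mul_div_cancel' hdvd
  have htn : t < n + 1 := by
    by_contra hcon
    push_neg at hcon
    have : (r+1)*(n+1) ≤ (r+1)*t := Nat.mul_le_mul_left _ hcon
    omega
  set τ := sigmaSh r n (n+1-t) with hτ
  obtain ⟨Q0, hQ0def⟩ : ∃ S : Finset (Fin ((r+1)*(n+1))) × Finset (Fin ((r+1)*(n+1))),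
      S = (Q.1.image τ, Q.2.image τ) := ⟨_, rfl⟩
  have hQ0fst : Q0.1 = Q.1.image τ := by rw [hQ0def]
  have hQ0snd : Q0.2 = Q.2.image τ := by rw [hQ0def]
  have hcomp : sigmaSh r n t ∘ τ = id := funext (sigma_sigma r n t (by omega))
  have himg1 : Q0.1.image (sigmaSh r n t) = Q.1 := by
    rw [hQ0fst, Finset.image_image, hcomp, Finset.image_id]
  have himg2 : Q0.2.image (sigmaSh r n t) = Q.2 := by
    rw [hQ0snd, Finset.image_image, hcomp, Finset.image_id]
  have hQeq : (Q0.1.image (sigmaSh r n t), Q0.2.image (sigmaSh r n t)) = Q :=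
    Prod.ext himg1 himg2
  have hQ0conf : IsConfig r n j Q0 := by
    refine ⟨?_, ?_, ?_, ?_⟩
    · intro u hu
      rw [hQ0fst] at hu
      obtain ⟨x, hx, rfl⟩ := Finset.mem_image.1 hu
      rw [hτ, sigma_color]
      exact hQ.1 x hx
    · intro b hb
      rw [hQ0snd] at hb
      obtain ⟨x, hx, rfl⟩ := Finset.mem_image.1 hb
      rw [hτ, sigma_color]
      exact hQ.2.1 x hx
    · rw [hQ0fst, hτ, Finset.card_image_of_injective _ (sigma_inj r n _)]
      exact hQ.2.2.1
    · rw [hQ0snd, hτ, Finset.card_image_of_injective _ (sigma_inj r n _)]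
      exact hQ.2.2.2
  have hQ0good : ∀ k < (r+1)*(n+1), 0 ≤ ∑ i ∈ Finset.range k, fstep Q0 i := by
    intro k hk
    have heq : ∀ i : ℕ, fstep Q0 i = fstep Q ((r+1)*t + i) := by
      intro i
      have h := fstep_shift r n Q0 t i
      rw [hQeq] at h
      exact h.symm
    rw [Finset.sum_congr rfl (fun i _ => heq i), hct]
    exact hcgood k hk
  obtain ⟨h0last, h0pre⟩ := config_last r n j hQ0conf 0 (by simpa using hQ0good)
  simp only [zero_add] at h0last h0pre
  have hLbmem : Lb r n ∈ Q0.2 := by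
    have hlt : (r+1)*(n+1) - 1 < (r+1)*(n+1) := by omega
    have hmem := fstep_neg_mem (Q := Q0) _ hlt h0last
    have hfin : (⟨(r+1)*(n+1)-1, hlt⟩ : Fin ((r+1)*(n+1))) = Lb r n :=
      Fin.ext (by show (r+1)*(n+1)-1 = (r+1)*n + r; omega)
    rwa [hfin] at hmem
  -- zero steps in the last block's white positions
  have hsplit : ∑ i ∈ Finset.range ((r+1)*(n+1)-1), fstep Q0 i
      = ∑ i ∈ Finset.range ((r+1)*n), fstep Q0 i
        + ∑ i ∈ Finset.range r, fstep Q0 ((r+1)*n + i) := by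
    have hrw : (r+1)*(n+1)-1 = (r+1)*n + r := by omega
    rw [hrw, Finset.sum_range_add]
  have hpreN := hQ0good ((r+1)*n) (by omega)
  have htermnn : ∀ i ∈ Finset.range r, 0 ≤ fstep Q0 ((r+1)*n + i) := by
    intro i hi
    have hiR := Finset.mem_range.1 hi
    have hlt : (r+1)*n + i < (r+1)*(n+1) := by omega
    rw [fstep_lt Q0 hlt]
    unfold stepF
    by_cases h1 : (⟨(r+1)*n+i, hlt⟩ : Fin ((r+1)*(n+1))) ∈ Q0.1
    · rw [if_pos h1]; norm_num
    · rw [if_neg h1]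
      by_cases h2 : (⟨(r+1)*n+i, hlt⟩ : Fin ((r+1)*(n+1))) ∈ Q0.2
      · exfalso
        have hcol := hQ0conf.2.1 _ h2
        simp only [wordRA, decide_eq_true_eq] at hcol
        have him : ((r+1)*n+i) % (r+1) = i % (r+1) := Nat.mul_add_mod _ _ _
        have : i % (r+1) = i := Nat.mod_eq_of_lt (by omega)
        omega
      · rw [if_neg h2]
  have hsumnn : 0 ≤ ∑ i ∈ Finset.range r, fstep Q0 ((r+1)*n+i) :=
    Finset.sum_nonneg htermnn
  have hB0 : ∑ i ∈ Finset.range r, fstep Q0 ((r+1)*n+i) = 0 := by omega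
  have hterms0 : ∀ i ∈ Finset.range r, fstep Q0 ((r+1)*n+i) = 0 :=
    (Finset.sum_eq_zero_iff_of_nonneg htermnn).1 hB0
  -- all whites of Q0 are in the first n blocks
  have hwhite : ∀ x ∈ Q0.1, x.val < (r+1)*n := by
    intro x hx
    by_contra hcon
    push_neg at hcon
    have hxlt := x.isLt
    have hxne : x.val ≠ (r+1)*(n+1) - 1 := by
      intro he
      have hcol := hQ0conf.1 x hx
      simp only [wordRA, decide_eq_false_iff_not] at hcol
      apply hcol
      rw [he, show (r+1)*(n+1) - 1 = (r+1)*n + r by omega, Nat.mul_add_mod]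
      exact Nat.mod_eq_of_lt (by omega)
    have hir : x.val - (r+1)*n < r := by omega
    have h1 := hterms0 (x.val - (r+1)*n) (Finset.mem_range.2 hir)
    have hlt : (r+1)*n + (x.val - (r+1)*n) < (r+1)*(n+1) := by omega
    rw [fstep_lt Q0 hlt] at h1
    unfold stepF at h1
    have hxx : (⟨(r+1)*n + (x.val - (r+1)*n), hlt⟩ : Fin ((r+1)*(n+1))) = x :=
      Fin.ext (by show (r+1)*n + (x.val - (r+1)*n) = x.val; omega)
    rw [hxx, if_pos hx] at h1
    norm_num at h1
  -- all blacks of Q0 except Lb are in the first n blocks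
  have hblack : ∀ y ∈ Q0.2, y ≠ Lb r n → y.val < (r+1)*n := by
    intro y hy hne
    by_contra hcon
    push_neg at hcon
    have hcol := hQ0conf.2.1 y hy
    simp only [wordRA, decide_eq_true_eq] at hcol
    have hylt := y.isLt
    have hdlt : y.val - (r+1)*n < r + 1 := by omega
    have hyv : y.val = (r+1)*n + (y.val - (r+1)*n) := by omega
    rw [hyv, Nat.mul_add_mod, Nat.mod_eq_of_lt hdlt] at hcol
    exact hne (Fin.ext (by show y.val = (r+1)*n + r; omega))
  set W : Finset (Fin ((r+1)*n)) :=
    Finset.univ.filter (fun x => iotaEmb r n x ∈ Q0.1) with hW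
  set B : Finset (Fin ((r+1)*n)) :=
    Finset.univ.filter (fun x => iotaEmb r n x ∈ Q0.2) with hB
  have hWim : W.image (iotaEmb r n) = Q0.1 := by
    ext y
    simp only [hW, Finset.mem_image, Finset.mem_filter, Finset.mem_univ, true_and]
    constructor
    · rintro ⟨x, hx, rfl⟩; exact hx
    · intro hy
      have hyN := hwhite y hy
      have hiy : iotaEmb r n ⟨y.val, hyN⟩ = y := Fin.ext rfl
      exact ⟨⟨y.val, hyN⟩, by rwa [hiy], hiy⟩
  have hBim : B.image (iotaEmb r n) = Q0.2.erase (Lb r n) := by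
    ext y
    simp only [hB, Finset.mem_image, Finset.mem_filter, Finset.mem_univ, true_and,
      Finset.mem_erase]
    constructor
    · rintro ⟨x, hx, rfl⟩
      refine ⟨?_, hx⟩
      intro he
      have h1 : x.val = (r+1)*n + r := congrArg Fin.val he
      have := x.isLt
      omega
    · rintro ⟨hne, hy⟩
      have hyN := hblack y hy hne
      have hiy : iotaEmb r n ⟨y.val, hyN⟩ = y := Fin.ext rfl
      exact ⟨⟨y.val, hyN⟩, by rwa [hiy], hiy⟩
  have hWcard : W.card = j := by
    have h := Finset.card_image_of_injective W (iota_inj r n)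
    rw [hWim] at h
    rw [← h]
    exact hQ0conf.2.2.1
  have hBcard : B.card = j := by
    have h := Finset.card_image_of_injective B (iota_inj r n)
    rw [hBim] at h
    rw [← h, Finset.card_erase_of_mem hLbmem, hQ0conf.2.2.2]
    omega
  have hWcol : ∀ u ∈ W, wordRA r n u = false := by
    intro u hu
    have h : iotaEmb r n u ∈ Q0.1 := (Finset.mem_filter.1 hu).2
    rw [← iota_color r n u]
    exact hQ0conf.1 _ h
  have hBcol : ∀ b ∈ B, wordRA r n b = true := by
    intro b hb
    have h : iotaEmb r n b ∈ Q0.2 := (Finset.mem_filter.1 hb).2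
    rw [← iota_color r n b]
    exact hQ0conf.2.1 _ h
  have hdisjQ0 : ∀ x ∈ Q0.1, x ∉ Q0.2 := config_disj r n j hQ0conf
  have hdom : ∀ p : ℕ, (B.filter (fun x => x.val < p)).card
      ≤ (W.filter (fun x => x.val < p)).card := by
    intro p
    rcases le_or_gt ((r+1)*n) p with hp | hp
    · have hBf : B.filter (fun x => x.val < p) = B :=
        Finset.filter_true_of_mem (fun x _ => by have := x.isLt; omega)
      have hWf : W.filter (fun x => x.val < p) = W :=
        Finset.filter_true_of_mem (fun x _ => by have := x.isLt; omega)
      rw [hBf, hWf, hWcard, hBcard]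
    · have hgp := hQ0good p (by omega)
      rw [sum_fstep_eq Q0 hdisjQ0 p (by omega)] at hgp
      have e1 : Q0.1.filter (fun x => x.val < p)
          = (W.filter (fun x => x.val < p)).image (iotaEmb r n) := by
        rw [← hWim, image_iota_filter]
      have hLbnot : Lb r n ∉ Q0.2.filter (fun x => x.val < p) := by
        intro hc
        have h1 := (Finset.mem_filter.1 hc).2
        have h2 : (Lb r n).val = (r+1)*n + r := rfl
        omega
      have e2 : Q0.2.filter (fun x => x.val < p)
          = (B.filter (fun x => x.val < p)).image (iotaEmb r n) := by
        rw [← image_iota_filter, hBim, Finset.filter_erase,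
          Finset.erase_eq_of_notMem hLbnot]
      rw [e1, e2, Finset.card_image_of_injective _ (iota_inj r n),
        Finset.card_image_of_injective _ (iota_inj r n)] at hgp
      omega
  refine ⟨⟨t, htn⟩, (W, B), ⟨hWcol, hBcol, hWcard, hBcard, hdom⟩, ?_⟩
  have hpad : padP r n (W, B) = Q0 := by
    apply Prod.ext
    · exact hWim
    · show insert (Lb r n) (B.image (iotaEmb r n)) = Q0.2
      rw [hBim]
      exact Finset.insert_erase hLbmem
  show ((padP r n (W, B)).1.image (sigmaSh r n t), (padP r n (W, B)).2.image (sigmaSh r n t)) = Q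
  rw [hpad]
  exact hQeq

end Main3

section Count

lemma count_main (r n j : ℕ) :
    Nat.card {Q : Finset (Fin ((r+1)*(n+1))) × Finset (Fin ((r+1)*(n+1))) // IsConfig r n j Q}
      = (n+1) * Nat.card {P : Finset (Fin ((r+1)*n)) × Finset (Fin ((r+1)*n)) //
          IsDomPair (wordRA r n) j P} := by
  have e : (Fin (n+1) × {P : Finset (Fin ((r+1)*n)) × Finset (Fin ((r+1)*n)) //
      IsDomPair (wordRA r n) j P}) ≃
      {Q : Finset (Fin ((r+1)*(n+1))) × Finset (Fin ((r+1)*(n+1))) // IsConfig r n j Q} := by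
    refine Equiv.ofBijective
      (fun x => ⟨PsiF r n x.1.val x.2.val, psi_config r n j x.1.val x.2.2⟩) ⟨?_, ?_⟩
    · rintro ⟨t, P, hP⟩ ⟨t', P', hP'⟩ h
      simp only [Subtype.mk.injEq] at h
      obtain ⟨h1, h2⟩ := psi_injective r n j t t' hP hP' h
      simp only [Prod.mk.injEq]
      exact ⟨h1, Subtype.ext h2⟩
    · rintro ⟨Q, hQ⟩
      obtain ⟨t, P, hP, hPsi⟩ := psi_surjective r n j hQ
      exact ⟨(t, ⟨P, hP⟩), Subtype.ext hPsi⟩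
  rw [← Nat.card_congr e, Nat.card_prod, Nat.card_eq_fintype_card, Fintype.card_fin]

lemma config_count (r n j : ℕ) :
    Nat.card {Q : Finset (Fin ((r+1)*(n+1))) × Finset (Fin ((r+1)*(n+1))) // IsConfig r n j Q}
      = Nat.choose (r*(n+1)) j * Nat.choose (n+1) (j+1) := by
  classical
  set M := (r+1)*(n+1) with hMdef
  set whites : Finset (Fin M) := Finset.univ.filter (fun i => wordRA r (n+1) i = false)
    with hwhites
  set blacks : Finset (Fin M) := Finset.univ.filter (fun i => wordRA r (n+1) i = true)
    with hblacks
  have hbc : blacks.card = n + 1 := by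
    rw [hblacks]
    rw [Finset.filter_congr (fun i _ => by simp [wordRA] : ∀ i ∈ Finset.univ,
      (wordRA r (n+1) i = true) ↔ ((i : Fin M).val % (r+1) = r))]
    exact blacks_card r (n+1)
  have hwc : whites.card = r * (n+1) := by
    have hsum := Finset.card_filter_add_card_filter_not
      (s := (Finset.univ : Finset (Fin M))) (p := fun i => wordRA r (n+1) i = true)
    have hwb : Finset.univ.filter (fun i : Fin M => ¬ (wordRA r (n+1) i = true)) = whites := by
      rw [hwhites]
      apply Finset.filter_congr
      intro i _
      exact Bool.eq_false_iff.symm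
    rw [hwb] at hsum
    have hcard : Fintype.card (Fin M) = M := Fintype.card_fin M
    rw [Finset.card_univ, hcard, hbc] at hsum
    have : M = r*(n+1) + (n+1) := by rw [hMdef]; ring
    omega
  have e : {Q : Finset (Fin M) × Finset (Fin M) // IsConfig r n j Q} ≃
      (↥(Finset.powersetCard j whites) × ↥(Finset.powersetCard (j+1) blacks)) := by
    refine ⟨fun Q => (⟨Q.1.1, ?_⟩, ⟨Q.1.2, ?_⟩), fun p => ⟨(p.1.1, p.2.1), ?_, ?_, ?_, ?_⟩,
      fun Q => rfl, fun p => rfl⟩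
    · rw [Finset.mem_powersetCard]
      exact ⟨fun x hx => Finset.mem_filter.2 ⟨Finset.mem_univ _, Q.2.1 x hx⟩, Q.2.2.2.1⟩
    · rw [Finset.mem_powersetCard]
      exact ⟨fun x hx => Finset.mem_filter.2 ⟨Finset.mem_univ _, Q.2.2.1 x hx⟩, Q.2.2.2.2⟩
    · intro u hu
      have := (Finset.mem_powersetCard.1 p.1.2).1 hu
      exact (Finset.mem_filter.1 this).2
    · intro b hb
      have := (Finset.mem_powersetCard.1 p.2.2).1 hb
      exact (Finset.mem_filter.1 this).2
    · exact (Finset.mem_powersetCard.1 p.1.2).2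
    · exact (Finset.mem_powersetCard.1 p.2.2).2
  rw [Nat.card_congr e, Nat.card_prod, Nat.card_eq_finsetCard, Nat.card_eq_finsetCard,
    Finset.card_powersetCard, Finset.card_powersetCard, hbc, hwc]

end Count

theorem stmt1 (r : ℕ) (hr : 1 ≤ r) (n j : ℕ) (hj : j ≤ n) :
    (n + 1) * ncCount (wordRA r n) j
      = Nat.choose (n + 1) (j + 1) * Nat.choose (r * n + r) j := by
  rw [ncCount_eq_domPairs, ← count_main, config_count]
  have h : r * (n+1) = r*n + r := by ring
  rw [h, Nat.mul_comm]
end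

section
/- Fix an integer r ≥ 1. For all integers n ≥ 0 and 0 ≤ j ≤ n, the number of noncrossing contractions with exactly j edges of the word (a^r a†)^n equals the number of noncrossing contractions with exactly j edges of the word (a (a†)^r)^n. -/
/-- The word `(a (a†)^r)^n`, of length `(r+1)n`: `n` blocks, each consisting of one `a`
(`false`) followed by `r` copies of `a†` (`true`). -/
def wordAR (r n : ℕ) : Fin ((r + 1) * n) → Bool := fun i => decide (0 < i.val % (r + 1))

/-- The edge-flipping involution: `(i,j) ↦ (j.rev, i.rev)`. -/
def flipEdge {N : ℕ} : (Fin N × Fin N) ≃ (Fin N × Fin N) where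
  toFun e := (e.2.rev, e.1.rev)
  invFun e := (e.2.rev, e.1.rev)
  left_inv e := by simp
  right_inv e := by simp

lemma flipEdge_symm {N : ℕ} (e : Fin N × Fin N) :
    (flipEdge.symm e) = (e.2.rev, e.1.rev) := rfl

lemma transfer {N : ℕ} (w w' : Fin N → Bool) (h : ∀ i : Fin N, w' i.rev = !w i)
    (E : Finset (Fin N × Fin N)) (hC : IsContraction w E) (hNC : IsNoncrossing E) :
    IsContraction w' (E.map flipEdge.toEmbedding) ∧
      IsNoncrossing (E.map flipEdge.toEmbedding) := by
  have hmem : ∀ e, e ∈ E.map flipEdge.toEmbedding ↔ (e.2.rev, e.1.rev) ∈ E := by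
    intro e
    rw [Finset.mem_map_equiv, flipEdge_symm]
  refine ⟨⟨?_, ?_⟩, ?_⟩
  · intro e he
    rw [hmem] at he
    obtain ⟨h1, h2, h3⟩ := hC.1 _ he
    refine ⟨?_, ?_, ?_⟩
    · simpa [Fin.rev_lt_rev] using h1
    · have hh := h e.1.rev
      rw [Fin.rev_rev] at hh
      dsimp only at h3
      rw [hh, h3, Bool.not_true]
    · have hh := h e.2.rev
      rw [Fin.rev_rev] at hh
      dsimp only at h2
      rw [hh, h2, Bool.not_false]
  · intro e he f hf hef
    rw [hmem] at he hf
    have hne : (e.2.rev, e.1.rev) ≠ (f.2.rev, f.1.rev) := by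
      intro hc
      apply hef
      have h1 : e.2.rev = f.2.rev := congrArg Prod.fst hc
      have h2 : e.1.rev = f.1.rev := congrArg Prod.snd hc
      have := Fin.rev_injective h1
      have := Fin.rev_injective h2
      exact Prod.ext (by assumption) (by assumption)
    obtain ⟨d1, d2, d3, d4⟩ := hC.2 _ he _ hf hne
    simp only at d1 d2 d3 d4
    exact ⟨fun hc => d4 (congrArg Fin.rev hc), fun hc => d3 (congrArg Fin.rev hc),
      fun hc => d2 (congrArg Fin.rev hc), fun hc => d1 (congrArg Fin.rev hc)⟩
  · intro e he f hf hcr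
    rw [hmem] at he hf
    refine hNC _ he _ hf ?_
    rcases hcr with ⟨h1, h2, h3⟩ | ⟨h1, h2, h3⟩
    · exact Or.inr ⟨Fin.rev_lt_rev.mpr h3, Fin.rev_lt_rev.mpr h2, Fin.rev_lt_rev.mpr h1⟩
    · exact Or.inl ⟨Fin.rev_lt_rev.mpr h3, Fin.rev_lt_rev.mpr h2, Fin.rev_lt_rev.mpr h1⟩

lemma flipEdge_map_map {N : ℕ} (E : Finset (Fin N × Fin N)) :
    (E.map flipEdge.toEmbedding).map flipEdge.toEmbedding = E := by
  ext e
  rw [Finset.mem_map_equiv, Finset.mem_map_equiv]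
  simp [flipEdge_symm, Fin.rev_rev]

lemma ncCount_rev {N : ℕ} (w w' : Fin N → Bool) (h : ∀ i : Fin N, w' i.rev = !w i)
    (m : ℕ) : ncCount w m = ncCount w' m := by
  have h' : ∀ i : Fin N, w i.rev = !w' i := by
    intro i
    have := h i.rev
    rw [Fin.rev_rev] at this
    rw [this, Bool.not_not]
  apply Nat.card_congr
  refine ⟨fun E => ⟨E.1.map flipEdge.toEmbedding, ?_⟩,
    fun E => ⟨E.1.map flipEdge.toEmbedding, ?_⟩, ?_, ?_⟩
  · obtain ⟨hC, hNC, hc⟩ := E.2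
    obtain ⟨a, b⟩ := transfer w w' h E.1 hC hNC
    exact ⟨a, b, by rw [Finset.card_map, hc]⟩
  · obtain ⟨hC, hNC, hc⟩ := E.2
    obtain ⟨a, b⟩ := transfer w' w h' E.1 hC hNC
    exact ⟨a, b, by rw [Finset.card_map, hc]⟩
  · intro E
    exact Subtype.ext (flipEdge_map_map E.1)
  · intro E
    exact Subtype.ext (flipEdge_map_map E.1)

lemma rev_mod (r n i : ℕ) (hi : i < (r + 1) * n) :
    ((r + 1) * n - (i + 1)) % (r + 1) = r - i % (r + 1) := by
  have hpos : 0 < r + 1 := Nat.succ_pos r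
  set q := i / (r + 1) with hq
  set t := i % (r + 1) with ht
  have htlt : t < r + 1 := Nat.mod_lt _ hpos
  have hit : (r + 1) * q + t = i := Nat.div_add_mod i (r + 1)
  have hqn : q < n := by
    rw [hq]
    exact Nat.div_lt_of_lt_mul (by omega)
  obtain ⟨m, hm⟩ : ∃ m, n = q + 1 + m := ⟨n - q - 1, by omega⟩
  have key : (r + 1) * n - (i + 1) = (r + 1) * m + (r - t) := by
    have : (r + 1) * n = (r + 1) * q + (r + 1) + (r + 1) * m := by
      rw [hm]; ring
    omega
  rw [key, Nat.mul_add_mod, Nat.mod_eq_of_lt (by omega)]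

lemma word_rev (r n : ℕ) (i : Fin ((r + 1) * n)) :
    wordAR r n i.rev = !wordRA r n i := by
  simp only [wordAR, wordRA, Fin.val_rev]
  have key := rev_mod r n i.val i.isLt
  have ht : i.val % (r + 1) < r + 1 := Nat.mod_lt _ (Nat.succ_pos r)
  rcases eq_or_ne (i.val % (r + 1)) r with h | h
  · simp [key, h]
  · have hpos : 0 < r - i.val % (r + 1) := by omega
    simp [key, h, hpos]

theorem stmt3 (r : ℕ) (hr : 1 ≤ r) (n j : ℕ) (hj : j ≤ n) :
    ncCount (wordRA r n) j = ncCount (wordAR r n) j := by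
  exact ncCount_rev _ _ (word_rev r n) j
end
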